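/- arXiv:2304.10213 — 8 statements merged into one kernel-verified Lean document; each statement's English description precedes it below -/
import Mathlib

section
/- Let H be a group, let G be a normal subgroup of H, let a ∈ H with H generated by G together with a, and let x ∈ G. Suppose that {x, x^a} is an invariable generating set of G, i.e., for all g, h ∈ G the subgroup generated by x^g and (x^a)^h is all of G. Then for every maximal subgroup M of H with G not contained in M, we have x ∉ M (in particular, x is a totally deranged element of H). -/
open scoped Pointwise


/-- If `{x, x^a}` is an invariable generating set of a normal subgroup `G` of `H = ⟨G, a⟩`,
then `x` lies in no maximal subgroup of `H` that does not contain `G`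
(so `x` is a totally deranged element of `H`). -/
theorem invariable_gen_implies_totally_deranged (H : Type) [Group H]
    (G : Subgroup H) [G.Normal] (a : H)
    (hgen : G ⊔ Subgroup.closure {a} = ⊤)
    (x : H) (hx : x ∈ G)
    (hinv : ∀ g ∈ G, ∀ h ∈ G,
      Subgroup.closure {g⁻¹ * x * g, h⁻¹ * (a⁻¹ * x * a) * h} = G) :
    ∀ M : Subgroup H, IsCoatom M → ¬ G ≤ M → x ∉ M := by
  intro M hM hGM hxM
  -- G ⊔ M = ⊤
  have hsup : G ⊔ M = ⊤ :=
    hM.2 (G ⊔ M) (lt_of_le_of_ne le_sup_right (fun h => hGM (by rw [h]; exact le_sup_left)))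
  -- write a = g * m with g ∈ G, m ∈ M
  have ha : a ∈ ((G : Set H) * (M : Set H)) := by
    rw [← Subgroup.normal_mul, hsup]; trivial
  obtain ⟨g, hg, m, hm, hgm⟩ := ha
  -- v := m⁻¹ * g⁻¹ * m ∈ G
  have hv : m⁻¹ * g⁻¹ * m ∈ G := by
    have := Subgroup.Normal.conj_mem ‹G.Normal› g⁻¹ (inv_mem hg) m⁻¹
    simpa [mul_assoc] using this
  have hav : a * (m⁻¹ * g⁻¹ * m) = m := by
    rw [← hgm]; group
  have key := hinv 1 (one_mem G) (m⁻¹ * g⁻¹ * m) hv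
  have h2 : (m⁻¹ * g⁻¹ * m)⁻¹ * (a⁻¹ * x * a) * (m⁻¹ * g⁻¹ * m) = m⁻¹ * x * m := by
    have : (m⁻¹ * g⁻¹ * m)⁻¹ * (a⁻¹ * x * a) * (m⁻¹ * g⁻¹ * m)
        = (a * (m⁻¹ * g⁻¹ * m))⁻¹ * x * (a * (m⁻¹ * g⁻¹ * m)) := by group
    rw [this, hav]
  have hle : G ≤ M := by
    rw [← key]
    apply (Subgroup.closure_le M).2
    intro y hy
    rcases hy with hy | hy
    · simp only [hy]
      simpa using hxM
    · simp only [Set.mem_singleton_iff] at hy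
      rw [hy, h2]
      exact mul_mem (mul_mem (inv_mem hm) hxM) hm
  exact hGM hle
end

section
/- Let n ≥ 5 and let x be an element of the symmetric group Sym(n). Then there exists a maximal subgroup M of Sym(n) such that x ∈ M and the alternating group Alt(n) is not contained in M (equivalently, M has trivial normal core). In particular, Sym(n) has no totally deranged elements. -/
open Equiv Equiv.Perm

def affSub (p : ℕ) : Subgroup (Equiv.Perm (ZMod p)) where
  carrier := {g | ∃ u : (ZMod p)ˣ, ∃ c : ZMod p, ∀ t, g t = u * t + c}
  one_mem' := ⟨1, 0, by intro t; simp⟩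
  mul_mem' := by
    rintro g h ⟨u, c, hg⟩ ⟨v, d, hh⟩
    refine ⟨u * v, u * d + c, fun t => ?_⟩
    show g (h t) = _
    rw [hh, hg]
    push_cast
    ring
  inv_mem' := by
    rintro g ⟨u, c, hg⟩
    refine ⟨u⁻¹, -(↑u⁻¹ * c), fun t => ?_⟩
    have : g (↑u⁻¹ * t + -(↑u⁻¹ * c)) = t := by
      rw [hg]
      simp only [mul_add, mul_neg, Units.mul_inv_cancel_left]
      ring
    calc g⁻¹ t = g⁻¹ (g (↑u⁻¹ * t + -(↑u⁻¹ * c))) := by rw [this]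
    _ = _ := g.symm_apply_apply _

lemma mem_affSub {p : ℕ} {g : Equiv.Perm (ZMod p)} :
    g ∈ affSub p ↔ ∃ u : (ZMod p)ˣ, ∃ c : ZMod p, ∀ t, g t = u * t + c := Iff.rfl

lemma prime_case (m : ℕ) [NeZero m] (hm : 5 ≤ m) (hp : m.Prime) (x0 : Equiv.Perm (ZMod m))
    (hx0 : ∀ t, x0 t = t + 1) :
    ∃ H : Subgroup (Equiv.Perm (ZMod m)), H ≠ ⊤ ∧ x0 ∈ H ∧
      ∃ g ∈ H, Equiv.Perm.sign g = -1 := by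
  haveI : Fact m.Prime := ⟨hp⟩
  -- basic numeral facts
  have hne : ∀ a b : ℕ, a < m → b < m → a ≠ b → (a : ZMod m) ≠ (b : ZMod m) := by
    intro a b ha hb hab h
    exact hab (by rw [← ZMod.val_cast_of_lt ha, ← ZMod.val_cast_of_lt hb, h])
  refine ⟨affSub m, ?_, mem_affSub.mpr ⟨1, 1, fun t => by simp [hx0, add_comm]⟩, ?_⟩
  · -- swap 1 2 is not affine
    intro htop
    have hnum : ∀ a b : ℕ, a < m → b < m → a ≠ b → ((a : ℕ) : ZMod m) ≠ ((b : ℕ) : ZMod m) := hne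
    have h01 : (0 : ZMod m) ≠ 1 := by have h := hne 0 1 (by omega) (by omega) (by omega); push_cast at h; exact h
    have h02 : (0 : ZMod m) ≠ 2 := by have h := hne 0 2 (by omega) (by omega) (by omega); push_cast at h; exact h
    have h31 : (3 : ZMod m) ≠ 1 := by have h := hne 3 1 (by omega) (by omega) (by omega); push_cast at h; exact h
    have h32 : (3 : ZMod m) ≠ 2 := by have h := hne 3 2 (by omega) (by omega) (by omega); push_cast at h; exact h
    have h30 : (3 : ZMod m) ≠ 0 := by have h := hne 3 0 (by omega) (by omega) (by omega); push_cast at h; exact h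
    have h21 : (2 : ZMod m) ≠ 1 := by have h := hne 2 1 (by omega) (by omega) (by omega); push_cast at h; exact h
    have hw : Equiv.swap (1 : ZMod m) (2 : ZMod m) ∈ affSub m := by
      rw [htop]; trivial
    obtain ⟨u, c, hf⟩ := mem_affSub.mp hw
    have e0 := hf 0
    rw [Equiv.swap_apply_of_ne_of_ne h01 h02] at e0
    have e3 := hf 3
    rw [Equiv.swap_apply_of_ne_of_ne h31 h32] at e3
    have e1 := hf 1
    rw [Equiv.swap_apply_left] at e1
    have hc : c = 0 := by linear_combination -e0
    have h3 : ((u : ZMod m) - 1) * 3 = 0 := by linear_combination -e3 - hc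
    have hu : (u : ZMod m) = 1 := by
      rcases mul_eq_zero.mp h3 with h' | h'
      · linear_combination h'
      · exact absurd h' h30
    rw [hu, hc, one_mul, add_zero] at e1
    exact h21 e1
  · -- odd element: multiplication by a generator of the units
    obtain ⟨r, hr⟩ := IsCyclic.exists_generator (α := (ZMod m)ˣ)
    have hr1 : (r : ZMod m) ≠ 1 := by
      intro h
      have hru : r = 1 := Units.ext (by simpa using h)
      obtain ⟨k, hk⟩ := Subgroup.mem_zpowers_iff.mp (hr (-1 : (ZMod m)ˣ))
      rw [hru, one_zpow] at hk
      have : ((-1 : (ZMod m)ˣ) : ZMod m) = ((1 : (ZMod m)ˣ) : ZMod m) := by rw [← hk]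
      have h2 : ((2 : ℕ) : ZMod m) = ((0 : ℕ) : ZMod m) := by
        push_cast at this ⊢
        linear_combination -this
      exact hne 2 0 (by omega) (by omega) (by omega) h2
    set g : Equiv.Perm (ZMod m) := MulAction.toPermHom (ZMod m)ˣ (ZMod m) r with hg
    have hgapp : ∀ (u : (ZMod m)ˣ) (t : ZMod m),
        MulAction.toPermHom (ZMod m)ˣ (ZMod m) u t = (u : ZMod m) * t := fun u t => rfl
    have hfix : ∀ t : ZMod m, g t = t ↔ t = 0 := by
      intro t
      rw [hg, hgapp]
      constructor
      · intro h
        have : ((r : ZMod m) - 1) * t = 0 := by linear_combination h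
        rcases mul_eq_zero.mp this with h' | h'
        · exact absurd (by linear_combination h') hr1
        · exact h'
      · intro h; rw [h, mul_zero]
    have hcyc : g.IsCycle := by
      refine ⟨1, ?_, ?_⟩
      · intro h
        exact hr1 (by simpa using (hfix 1).mp h)
      · intro b hb
        have hb0 : b ≠ 0 := fun h => hb ((hfix b).mpr h)
        obtain ⟨k, hk⟩ := Subgroup.mem_zpowers_iff.mp (hr (Units.mk0 b hb0))
        refine ⟨k, ?_⟩
        have : (g ^ k) 1 = ((r ^ k : (ZMod m)ˣ) : ZMod m) * 1 := by
          rw [hg, ← map_zpow, hgapp]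
        rw [this, hk, mul_one]
        rfl
    have hsupp : g.support = {(0 : ZMod m)}ᶜ := by
      ext a
      simp [Equiv.Perm.mem_support, hfix a]
    have hcard : g.support.card = m - 1 := by
      rw [hsupp, Finset.card_compl, Finset.card_singleton, ZMod.card]
    have hmodd : Odd m := hp.odd_of_ne_two (by omega)
    have heven : Even (m - 1) := Nat.Odd.sub_odd hmodd odd_one
    refine ⟨g, mem_affSub.mpr ⟨r, 0, fun t => by rw [hg, hgapp, add_zero]⟩, ?_⟩
    rw [hcyc.sign, hcard, heven.neg_one_pow]

def fibStab {α γ : Type*} (f : α → γ) : Subgroup (Equiv.Perm α) where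
  carrier := {g | ∀ a b, f a = f b ↔ f (g a) = f (g b)}
  one_mem' := by intro a b; rfl
  mul_mem' := by
    intro g h hg hh a b
    exact (hh a b).trans (hg (h a) (h b))
  inv_mem' := by
    intro g hg a b
    have := (hg (g⁻¹ a) (g⁻¹ b)).symm
    simpa using this

lemma mem_fibStab {α γ : Type*} {f : α → γ} {g : Equiv.Perm α} :
    g ∈ fibStab f ↔ ∀ a b, f a = f b ↔ f (g a) = f (g b) := Iff.rfl

lemma composite_case (m : ℕ) [NeZero m] (hm : 5 ≤ m) (d : ℕ) (hdvd : d ∣ m)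
    (hd2 : 2 ≤ d) (hdm : d < m) (x0 : Equiv.Perm (ZMod m)) (hx0 : ∀ t, x0 t = t + 1) :
    ∃ H : Subgroup (Equiv.Perm (ZMod m)), H ≠ ⊤ ∧ x0 ∈ H ∧
      ∃ g ∈ H, Equiv.Perm.sign g = -1 := by
  haveI : NeZero d := ⟨by omega⟩
  set π : ZMod m →+* ZMod d := ZMod.castHom hdvd (ZMod d) with hπ
  have hd0 : ((d : ℕ) : ZMod m) ≠ 0 := by
    rw [Ne, ZMod.natCast_eq_zero_iff]
    intro h
    exact absurd (Nat.le_of_dvd (by omega) h) (by omega)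
  have hd1 : ((d : ℕ) : ZMod m) ≠ 1 := by
    haveI : Fact (1 < m) := ⟨by omega⟩
    intro h
    have h2 := congrArg ZMod.val h
    rw [ZMod.val_cast_of_lt hdm, ZMod.val_one] at h2
    omega
  have hπd : π ((d : ℕ) : ZMod m) = 0 := by
    rw [map_natCast, ZMod.natCast_self]
  have h10 : (1 : ZMod m) ≠ 0 := by
    haveI : Fact (1 < m) := ⟨by omega⟩
    exact one_ne_zero
  refine ⟨fibStab π, ?_, ?_, ?_⟩
  · -- swap 0 1 not in it
    intro htop
    have hw : Equiv.swap (0 : ZMod m) (1 : ZMod m) ∈ fibStab π := by rw [htop]; trivial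
    have hco := (mem_fibStab.mp hw 0 ((d : ℕ) : ZMod m)).mp (by rw [map_zero, hπd])
    rw [Equiv.swap_apply_left, Equiv.swap_apply_of_ne_of_ne hd0 hd1, hπd, map_one] at hco
    haveI : Fact (1 < d) := ⟨by omega⟩
    exact one_ne_zero hco
  · -- x0 preserves fibers
    intro a b
    simp only [hx0, map_add]
    constructor
    · intro h; rw [h]
    · intro h; exact add_right_cancel h
  · -- swap 0 d
    refine ⟨Equiv.swap (0 : ZMod m) ((d : ℕ) : ZMod m), ?_, Equiv.Perm.sign_swap (Ne.symm hd0)⟩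
    have hpt : ∀ a, π (Equiv.swap (0 : ZMod m) ((d : ℕ) : ZMod m) a) = π a := by
      intro a
      by_cases h0 : a = 0
      · rw [h0, Equiv.swap_apply_left, hπd, map_zero]
      · by_cases hd : a = ((d : ℕ) : ZMod m)
        · rw [hd, Equiv.swap_apply_right, hπd, map_zero]
        · rw [Equiv.swap_apply_of_ne_of_ne h0 hd]
    intro a b
    rw [hpt, hpt]

/-- Conjugation by an equivalence, as a `MulEquiv` on permutation groups. -/
def permCongrMulEquiv {α β : Type*} (e : α ≃ β) : Equiv.Perm α ≃* Equiv.Perm β :=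
  { e.permCongr with
    map_mul' := by
      intro p q
      show e.permCongr (q.trans p) = (e.permCongr q).trans (e.permCongr p)
      rw [Equiv.permCongr_trans] }

lemma transport {α β : Type*} [DecidableEq α] [Fintype α] [DecidableEq β] [Fintype β]
    (e : α ≃ β) (x : Equiv.Perm β)
    (h : ∃ H : Subgroup (Equiv.Perm α), H ≠ ⊤ ∧ e.symm.permCongr x ∈ H ∧
      ∃ g ∈ H, Equiv.Perm.sign g = -1) :
    ∃ H : Subgroup (Equiv.Perm β), H ≠ ⊤ ∧ x ∈ H ∧
      ∃ g ∈ H, Equiv.Perm.sign g = -1 := by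
  obtain ⟨H, hH, hx, g, hg, hsg⟩ := h
  set φ := permCongrMulEquiv e with hφ
  refine ⟨H.map φ.toMonoidHom, ?_, ?_, φ g, Subgroup.mem_map_of_mem _ hg, ?_⟩
  · intro htop
    apply hH
    have hinj := Subgroup.map_injective (G := Equiv.Perm α) (f := φ.toMonoidHom)
      (MulEquiv.injective φ)
    apply hinj
    rw [htop, Subgroup.map_top_of_surjective _ (MulEquiv.surjective φ)]
  · have : φ (e.symm.permCongr x) = x := by
      show e.permCongr (e.symm.permCongr x) = x
      rw [← Equiv.permCongr_symm, Equiv.apply_symm_apply]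
    exact this ▸ Subgroup.mem_map_of_mem _ hx
  · show Equiv.Perm.sign (e.permCongr g) = -1
    rw [Equiv.Perm.sign_permCongr, hsg]

def setStab {α : Type*} (S : Set α) : Subgroup (Equiv.Perm α) where
  carrier := {g | ∀ a, a ∈ S ↔ g a ∈ S}
  one_mem' := by intro a; rfl
  mul_mem' := by
    intro g h hg hh a
    exact (hh a).trans (hg (h a))
  inv_mem' := by
    intro g hg a
    have := (hg (g⁻¹ a)).symm
    simpa using this

lemma mem_setStab {α : Type*} {S : Set α} {g : Equiv.Perm α} :
    g ∈ setStab S ↔ ∀ a, a ∈ S ↔ g a ∈ S := Iff.rfl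

lemma intransitive_case (n : ℕ) (hn : 5 ≤ n) (x : Equiv.Perm (Fin n)) (z : Fin n)
    (b : Fin n) (hb : ∀ k : ℕ, (x ^ k) z ≠ b) :
    ∃ H : Subgroup (Equiv.Perm (Fin n)), H ≠ ⊤ ∧ x ∈ H ∧
      ∃ g ∈ H, Equiv.Perm.sign g = -1 := by
  set S : Set (Fin n) := {a | ∃ k : ℕ, (x ^ k) z = a} with hS
  have hzS : z ∈ S := ⟨0, rfl⟩
  have hbS : b ∉ S := by rintro ⟨k, hk⟩; exact hb k hk
  have hxS : x ∈ setStab S := by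
    intro a
    constructor
    · rintro ⟨k, rfl⟩
      exact ⟨k + 1, by rw [pow_succ', Equiv.Perm.mul_apply]⟩
    · rintro ⟨k, hk⟩
      have hord : 1 ≤ orderOf x := (orderOf_pos x)
      refine ⟨orderOf x - 1 + k, ?_⟩
      have h1 : x ^ (orderOf x - 1 + k) = x ^ (orderOf x - 1) * x ^ k := pow_add x _ _
      have h2 : x ^ (orderOf x - 1) * x = 1 := by
        rw [← pow_succ]
        rw [show orderOf x - 1 + 1 = orderOf x by omega]
        exact pow_orderOf_eq_one x
      calc (x ^ (orderOf x - 1 + k)) z = (x ^ (orderOf x - 1)) ((x ^ k) z) := by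
            rw [h1, Equiv.Perm.mul_apply]
        _ = (x ^ (orderOf x - 1)) (x a) := by rw [hk]
        _ = (x ^ (orderOf x - 1) * x) a := by rw [Equiv.Perm.mul_apply]
        _ = a := by rw [h2, Equiv.Perm.one_apply]
  have hzb : z ≠ b := fun h => hbS (h ▸ hzS)
  -- find a third point
  have hne : ({z, b} : Finset (Fin n)) ≠ Finset.univ := by
    intro h
    have hcard := congrArg Finset.card h
    have h2 : ({z, b} : Finset (Fin n)).card ≤ 2 :=
      le_trans (Finset.card_insert_le _ _) (by simp)
    rw [Finset.card_univ, Fintype.card_fin] at hcard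
    omega
  obtain ⟨c, -, hc⟩ := Finset.exists_of_ssubset (Finset.ssubset_univ_iff.mpr hne)
  simp only [Finset.mem_insert, Finset.mem_singleton, not_or] at hc
  have hswap : ∀ u v : Fin n, (u ∈ S ↔ v ∈ S) → Equiv.swap u v ∈ setStab S := by
    intro u v huv a
    by_cases hau : a = u
    · rw [hau, Equiv.swap_apply_left]; exact huv
    by_cases hav : a = v
    · rw [hav, Equiv.swap_apply_right]; exact huv.symm
    rw [Equiv.swap_apply_of_ne_of_ne hau hav]
  have hnetop : setStab S ≠ ⊤ := by
    intro h
    have hw : Equiv.swap z b ∈ setStab S := by rw [h]; trivial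
    have := (hw z).mp hzS
    rw [Equiv.swap_apply_left] at this
    exact hbS this
  by_cases hcS : c ∈ S
  · exact ⟨setStab S, hnetop, hxS, Equiv.swap z c,
      hswap z c (iff_of_true hzS hcS), Equiv.Perm.sign_swap (Ne.symm hc.1)⟩
  · exact ⟨setStab S, hnetop, hxS, Equiv.swap c b,
      hswap c b (iff_of_false hcS hbS), Equiv.Perm.sign_swap hc.2⟩

lemma transitive_case (n : ℕ) (hn : 5 ≤ n) (x : Equiv.Perm (Fin n)) (z : Fin n)
    (htr : ∀ b : Fin n, ∃ k : ℕ, (x ^ k) z = b) :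
    ∃ H : Subgroup (Equiv.Perm (Fin n)), H ≠ ⊤ ∧ x ∈ H ∧
      ∃ g ∈ H, Equiv.Perm.sign g = -1 := by
  set m := orderOf x with hm
  haveI : NeZero m := ⟨(orderOf_pos x).ne'⟩
  have hfix : ∀ (t : ℕ) (b : Fin n), (x ^ t) b = b → x ^ t = 1 := by
    intro t b htb
    have hz : (x ^ t) z = z := by
      obtain ⟨k, hk⟩ := htr b
      have hcomm : (x ^ t) ((x ^ k) z) = (x ^ k) ((x ^ t) z) := by
        rw [← Equiv.Perm.mul_apply, ← Equiv.Perm.mul_apply, ← pow_add, ← pow_add, add_comm]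
      rw [hk, htb] at hcomm
      have h' : (x ^ k) ((x ^ t) z) = (x ^ k) z := by rw [← hcomm, hk]
      exact (x ^ k).injective h' 
    apply Equiv.ext
    intro c
    obtain ⟨k, hk⟩ := htr c
    have hcomm : (x ^ t) ((x ^ k) z) = (x ^ k) ((x ^ t) z) := by
      rw [← Equiv.Perm.mul_apply, ← Equiv.Perm.mul_apply, ← pow_add, ← pow_add, add_comm]
    rw [hk] at hcomm
    rw [hcomm, hz, hk, Equiv.Perm.one_apply]
  set f : ZMod m → Fin n := fun k => (x ^ k.val) z with hf
  have haux : ∀ a b : ℕ, a ≤ b → (x ^ a) z = (x ^ b) z → x ^ (b - a) = 1 := by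
    intro a b hab h
    have hsplit : x ^ b = x ^ (b - a) * x ^ a := by
      rw [← pow_add]; congr 1; omega
    rw [hsplit, Equiv.Perm.mul_apply] at h
    exact hfix (b - a) ((x ^ a) z) h.symm
  have hinj : Function.Injective f := by
    intro i j hij
    have hvm : ∀ a b : ZMod m, a.val ≤ b.val → f a = f b → a = b := by
      intro a b hab h
      have := haux a.val b.val hab h
      have hdvd : m ∣ b.val - a.val := orderOf_dvd_of_pow_eq_one this
      have hlt : b.val - a.val < m := lt_of_le_of_lt (Nat.sub_le _ _) (ZMod.val_lt b)
      have h0 : b.val - a.val = 0 := Nat.eq_zero_of_dvd_of_lt hdvd hlt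
      have : a.val = b.val := by omega
      exact ZMod.val_injective m this
    rcases le_total i.val j.val with h | h
    · exact hvm i j h hij
    · exact (hvm j i h hij.symm).symm
  have hsurj : Function.Surjective f := by
    intro c
    obtain ⟨k, hk⟩ := htr c
    refine ⟨(k : ZMod m), ?_⟩
    show (x ^ (ZMod.val ((k : ℕ) : ZMod m))) z = c
    rw [ZMod.val_natCast, pow_mod_orderOf, hk]
  set e : ZMod m ≃ Fin n := Equiv.ofBijective f ⟨hinj, hsurj⟩ with he
  have hmn : m = n := by
    have := Fintype.card_congr e
    rwa [ZMod.card, Fintype.card_fin] at this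
  have hm5 : 5 ≤ m := hmn ▸ hn
  haveI : Fact (1 < m) := ⟨by omega⟩
  have hfsucc : ∀ k : ZMod m, f (k + 1) = x (f k) := by
    intro k
    show (x ^ (k + 1).val) z = x ((x ^ k.val) z)
    rw [ZMod.val_add, ZMod.val_one, pow_mod_orderOf, pow_succ', Equiv.Perm.mul_apply]
  have hy : ∀ t : ZMod m, (e.symm.permCongr x) t = t + 1 := by
    intro t
    have h1 : (e.symm.permCongr x) t = e.symm (x (e t)) := by
      simp [Equiv.permCongr_apply]
    have h2 : x (e t) = e (t + 1) := (hfsucc t).symm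
    rw [h1, h2, Equiv.symm_apply_apply]
  apply transport e x
  by_cases hp : m.Prime
  · exact prime_case m hm5 hp _ hy
  · obtain ⟨d, hdvd, hd2, hdm⟩ := Nat.exists_dvd_of_not_prime2 (by omega) hp
    exact composite_case m hm5 d hdvd hd2 hdm _ hy

lemma key_lemma (n : ℕ) (hn : 5 ≤ n) (x : Equiv.Perm (Fin n)) :
    ∃ H : Subgroup (Equiv.Perm (Fin n)), H ≠ ⊤ ∧ x ∈ H ∧
      ∃ g ∈ H, Equiv.Perm.sign g = -1 := by
  have hz : 0 < n := by omega
  by_cases htr : ∀ b : Fin n, ∃ k : ℕ, (x ^ k) (⟨0, hz⟩ : Fin n) = b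
  · exact transitive_case n hn x _ htr
  · push_neg at htr
    obtain ⟨b, hb⟩ := htr
    exact intransitive_case n hn x _ b hb

/-- For `n ≥ 5`, every element of `Sym(n)` lies in a maximal subgroup not containing
`Alt(n)` (equivalently, a core-free maximal subgroup); in particular, `Sym(n)` has no
totally deranged elements. -/
theorem symmetric_group_no_totally_deranged (n : ℕ) (hn : 5 ≤ n)
    (x : Equiv.Perm (Fin n)) :
    ∃ M : Subgroup (Equiv.Perm (Fin n)), IsCoatom M ∧ x ∈ M ∧
      ¬ alternatingGroup (Fin n) ≤ M := by
  obtain ⟨H, hHtop, hxH, g, hgH, hgs⟩ := key_lemma n hn x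
  haveI : Finite (Subgroup (Equiv.Perm (Fin n))) :=
    Finite.of_injective (fun H : Subgroup (Equiv.Perm (Fin n)) => (H : Set (Equiv.Perm (Fin n))))
      SetLike.coe_injective
  rcases eq_top_or_exists_le_coatom H with h | ⟨M, hM, hHM⟩
  · exact absurd h hHtop
  refine ⟨M, hM, hHM hxH, ?_⟩
  intro hAlt
  apply hM.1
  rw [eq_top_iff]
  intro h _
  rcases Int.units_eq_one_or (Equiv.Perm.sign h) with h1 | h1
  · exact hAlt (Equiv.Perm.mem_alternatingGroup.mpr h1)
  · have hmem : h * g⁻¹ ∈ alternatingGroup (Fin n) := by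
      rw [Equiv.Perm.mem_alternatingGroup, map_mul, map_inv, h1, hgs]
      decide
    have hfin := mul_mem (hAlt hmem) (hHM hgH)
    simpa using hfin
end

section
/- Let L be a group, let X be a normal subgroup of L, and let σ₁, σ₂ ∈ L with σ₁σ₂ = σ₂σ₁. Let Y be a subgroup of X with σ₁Yσ₁⁻¹ = Y and σ₂Yσ₂⁻¹ = Y, and assume that for each i ∈ {1, 2} every element of the coset Y·σᵢ is conjugate to σᵢ by an element of Y. Let a ∈ X, set g = a σ₂ a⁻¹ and h = a⁻¹ σ₁ a, and assume g σ₁ = σ₁ g. Then there exists c ∈ X with c σ₁ = σ₁ c and c⁻¹ g c ∈ Y·σ₂ if and only if there exists d ∈ X with d σ₂ = σ₂ d and d⁻¹ h d ∈ Y·σ₁. -/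
/-- Abstract form of Shintani descent for algebraic subgroups (Theorem 2.4): with
`g = a σ₂ a⁻¹` and `h = a⁻¹ σ₁ a`, the element `g` lies in an `X_{σ₁}`-conjugate of the
coset `Y·σ₂` if and only if `h` lies in an `X_{σ₂}`-conjugate of the coset `Y·σ₁`. -/
theorem shintani_descent_subgroups (L : Type) [Group L] (X : Subgroup L) [X.Normal]
    (σ₁ σ₂ : L) (hcomm : σ₁ * σ₂ = σ₂ * σ₁)
    (Y : Subgroup L) (hYX : Y ≤ X)
    (hY1 : ∀ y : L, y ∈ Y ↔ σ₁ * y * σ₁⁻¹ ∈ Y)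
    (hY2 : ∀ y : L, y ∈ Y ↔ σ₂ * y * σ₂⁻¹ ∈ Y)
    (hLang1 : ∀ y ∈ Y, ∃ u ∈ Y, u⁻¹ * (y * σ₁) * u = σ₁)
    (hLang2 : ∀ y ∈ Y, ∃ u ∈ Y, u⁻¹ * (y * σ₂) * u = σ₂)
    (a : L) (ha : a ∈ X)
    (hg : (a * σ₂ * a⁻¹) * σ₁ = σ₁ * (a * σ₂ * a⁻¹)) :
    (∃ c ∈ X, c * σ₁ = σ₁ * c ∧
        ∃ y ∈ Y, c⁻¹ * (a * σ₂ * a⁻¹) * c = y * σ₂) ↔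
    (∃ d ∈ X, d * σ₂ = σ₂ * d ∧
        ∃ y ∈ Y, d⁻¹ * (a⁻¹ * σ₁ * a) * d = y * σ₁) := by
  constructor
  · rintro ⟨c, hcX, hcσ, y, hyY, hcy⟩
    obtain ⟨u, huY, hu⟩ := hLang2 y hyY
    have key : u⁻¹ * (c⁻¹ * (a * σ₂ * a⁻¹) * c) * u = σ₂ := by rw [hcy]; exact hu
    refine ⟨a⁻¹ * c * u, mul_mem (mul_mem (inv_mem ha) hcX) (hYX huY), ?_, ?_⟩
    · conv_lhs => rw [← key]
      group
    · refine ⟨u⁻¹ * (σ₁ * u * σ₁⁻¹), mul_mem (inv_mem huY) ((hY1 u).mp huY), ?_⟩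
      have e : σ₁ = c⁻¹ * σ₁ * c := by rw [mul_assoc, ← hcσ]; group
      conv_rhs => rw [e]
      group
  · rintro ⟨d, hdX, hdσ, y, hyY, hdy⟩
    obtain ⟨u, huY, hu⟩ := hLang1 y hyY
    have key : u⁻¹ * (d⁻¹ * (a⁻¹ * σ₁ * a) * d) * u = σ₁ := by rw [hdy]; exact hu
    refine ⟨a * d * u, mul_mem (mul_mem ha hdX) (hYX huY), ?_, ?_⟩
    · conv_lhs => rw [← key]
      group
    · refine ⟨u⁻¹ * (σ₂ * u * σ₂⁻¹), mul_mem (inv_mem huY) ((hY2 u).mp huY), ?_⟩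
      have e : σ₂ = d⁻¹ * σ₂ * d := by rw [mul_assoc, ← hdσ]; group
      conv_rhs => rw [e]
      group
end

section
/- Let L be a group, let X be a normal subgroup of L, and let σ ∈ L; assume that for every integer j ≥ 1, every element of the coset X·σ^j is conjugate to σ^j by an element of X (the Lang property). Let l, m be positive integers with l dividing m, and let k be a prime divisor of m. Let a ∈ X, set g = a σ^l a⁻¹ and h = a⁻¹ σ^m a, and assume g σ^m = σ^m g. Then the following are equivalent: (1) there exists c ∈ X with c σ^m = σ^m c such that c⁻¹ g c ∈ X_{σ^{m/k}}·σ^l; (2) there exist z ∈ X·σ^{m/k} with z σ^l = σ^l z and d ∈ X with d σ^l = σ^l d such that d⁻¹ h d = z^k. -/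
private lemma conj_pow_aux {L : Type} [Group L] (b x : L) (n : ℕ) :
    (b * x * b⁻¹) ^ n = b * x ^ n * b⁻¹ := by
  induction n with
  | zero => group
  | succ n ih => rw [pow_succ, pow_succ, ih]; group

private lemma conj_pow_aux' {L : Type} [Group L] (b x : L) (n : ℕ) :
    (b⁻¹ * x * b) ^ n = b⁻¹ * x ^ n * b := by
  have := conj_pow_aux b⁻¹ x n
  rwa [inv_inv] at this

/-- Abstract form of Shintani descent and subfield subgroups (Theorem 2.6): with
`g = a σ^l a⁻¹` (representing an element of `X_{σ^m}·σ^l`) and `h = a⁻¹ σ^m a` its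
Shintani correspondent, `g` lies in an `X_{σ^m}`-conjugate of `X_{σ^{m/k}}·σ^l` if and
only if the Shintani correspondent is a `k`-th power of an element of the coset
`X_{σ^l}·σ^{m/k}`. -/
theorem shintani_descent_subfields (L : Type) [Group L] (X : Subgroup L) [X.Normal]
    (σ : L)
    (hLang : ∀ j : ℕ, 1 ≤ j → ∀ x ∈ X, ∃ u ∈ X, u⁻¹ * (x * σ ^ j) * u = σ ^ j)
    (l m : ℕ) (hl : 0 < l) (hm : 0 < m) (hlm : l ∣ m)
    (k : ℕ) (hk : k.Prime) (hkm : k ∣ m)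
    (a : L) (ha : a ∈ X)
    (hg : (a * σ ^ l * a⁻¹) * σ ^ m = σ ^ m * (a * σ ^ l * a⁻¹)) :
    (∃ c ∈ X, c * σ ^ m = σ ^ m * c ∧
        ∃ y ∈ X, y * σ ^ (m / k) = σ ^ (m / k) * y ∧
          c⁻¹ * (a * σ ^ l * a⁻¹) * c = y * σ ^ l) ↔
    (∃ z : L, (∃ v ∈ X, z = v * σ ^ (m / k)) ∧ z * σ ^ l = σ ^ l * z ∧
        ∃ d ∈ X, d * σ ^ l = σ ^ l * d ∧
          d⁻¹ * (a⁻¹ * σ ^ m * a) * d = z ^ k) := by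
  have hN : X.Normal := inferInstance
  have hkm' : m / k * k = m := Nat.div_mul_cancel hkm
  have hr : 1 ≤ m / k :=
    (Nat.one_le_div_iff hk.pos).mpr (Nat.le_of_dvd hm hkm)
  have hσm : (σ ^ (m / k)) ^ k = σ ^ m := by rw [← pow_mul, hkm']
  have hσcomm : σ ^ (m / k) * σ ^ l = σ ^ l * σ ^ (m / k) := by
    rw [← pow_add, ← pow_add, Nat.add_comm]
  constructor
  · rintro ⟨c, hc, hcσ, y, hy, hyσ, hcy⟩
    have hbX : (a⁻¹ * c : L) ∈ X := mul_mem (inv_mem ha) hc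
    refine ⟨(a⁻¹ * c) * σ ^ (m / k) * (a⁻¹ * c)⁻¹,
      ⟨(a⁻¹ * c) * σ ^ (m / k) * (a⁻¹ * c)⁻¹ * (σ ^ (m / k))⁻¹, ?_, by group⟩,
      ?_, 1, one_mem X, by group, ?_⟩
    · have h1 : σ ^ (m / k) * (a⁻¹ * c)⁻¹ * (σ ^ (m / k))⁻¹ ∈ X :=
        hN.conj_mem _ (inv_mem hbX) _
      have h2 : (a⁻¹ * c) * σ ^ (m / k) * (a⁻¹ * c)⁻¹ * (σ ^ (m / k))⁻¹
          = (a⁻¹ * c) * (σ ^ (m / k) * (a⁻¹ * c)⁻¹ * (σ ^ (m / k))⁻¹) := by group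
      rw [h2]
      exact mul_mem hbX h1
    · -- z commutes with σ^l
      have h2 : (a⁻¹ * c)⁻¹ * σ ^ l * (a⁻¹ * c) = y * σ ^ l := by
        calc (a⁻¹ * c)⁻¹ * σ ^ l * (a⁻¹ * c)
            = c⁻¹ * (a * σ ^ l * a⁻¹) * c := by group
          _ = y * σ ^ l := hcy
      have h3 : σ ^ (m / k) * (y * σ ^ l) = (y * σ ^ l) * σ ^ (m / k) := by
        calc σ ^ (m / k) * (y * σ ^ l)
            = (σ ^ (m / k) * y) * σ ^ l := by group
          _ = (y * σ ^ (m / k)) * σ ^ l := by rw [hyσ]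
          _ = y * (σ ^ (m / k) * σ ^ l) := by group
          _ = y * (σ ^ l * σ ^ (m / k)) := by rw [hσcomm]
          _ = (y * σ ^ l) * σ ^ (m / k) := by group
      have h4 : σ ^ (m / k) * ((a⁻¹ * c)⁻¹ * σ ^ l * (a⁻¹ * c))
          = ((a⁻¹ * c)⁻¹ * σ ^ l * (a⁻¹ * c)) * σ ^ (m / k) := by
        rw [h2]; exact h3
      calc (a⁻¹ * c) * σ ^ (m / k) * (a⁻¹ * c)⁻¹ * σ ^ l
          = (a⁻¹ * c) * (σ ^ (m / k) * ((a⁻¹ * c)⁻¹ * σ ^ l * (a⁻¹ * c))) * (a⁻¹ * c)⁻¹ := by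
            group
        _ = (a⁻¹ * c) * (((a⁻¹ * c)⁻¹ * σ ^ l * (a⁻¹ * c)) * σ ^ (m / k)) * (a⁻¹ * c)⁻¹ := by
            rw [h4]
        _ = σ ^ l * ((a⁻¹ * c) * σ ^ (m / k) * (a⁻¹ * c)⁻¹) := by group
    · -- d⁻¹ h d = z ^ k  with d = 1
      have h5 : c * σ ^ m * c⁻¹ = σ ^ m := by
        calc c * σ ^ m * c⁻¹ = (c * σ ^ m) * c⁻¹ := by group
          _ = (σ ^ m * c) * c⁻¹ := by rw [hcσ]
          _ = σ ^ m := by group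
      calc (1 : L)⁻¹ * (a⁻¹ * σ ^ m * a) * 1
          = a⁻¹ * σ ^ m * a := by group
        _ = a⁻¹ * (c * σ ^ m * c⁻¹) * a := by rw [h5]
        _ = (a⁻¹ * c) * σ ^ m * (a⁻¹ * c)⁻¹ := by group
        _ = (a⁻¹ * c) * (σ ^ (m / k)) ^ k * (a⁻¹ * c)⁻¹ := by rw [hσm]
        _ = ((a⁻¹ * c) * σ ^ (m / k) * (a⁻¹ * c)⁻¹) ^ k := (conj_pow_aux _ _ _).symm
  · rintro ⟨z, ⟨v, hv, rfl⟩, hzσl, d, hd, hdσ, hdh⟩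
    obtain ⟨u, hu, huz⟩ := hLang (m / k) hr v hv
    refine ⟨a * d * u, mul_mem (mul_mem ha hd) hu, ?_,
      u⁻¹ * σ ^ l * u * (σ ^ l)⁻¹, ?_, ?_, ?_⟩
    · -- c commutes with σ^m
      have h7 : (a * d * u)⁻¹ * σ ^ m * (a * d * u) = σ ^ m := by
        calc (a * d * u)⁻¹ * σ ^ m * (a * d * u)
            = u⁻¹ * (d⁻¹ * (a⁻¹ * σ ^ m * a) * d) * u := by group
          _ = u⁻¹ * (v * σ ^ (m / k)) ^ k * u := by rw [hdh]
          _ = (u⁻¹ * (v * σ ^ (m / k)) * u) ^ k := (conj_pow_aux' _ _ _).symm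
          _ = (σ ^ (m / k)) ^ k := by rw [huz]
          _ = σ ^ m := hσm
      calc (a * d * u) * σ ^ m
          = (a * d * u) * ((a * d * u)⁻¹ * σ ^ m * (a * d * u)) := by rw [h7]
        _ = σ ^ m * (a * d * u) := by group
    · -- y ∈ X
      have h8 : σ ^ l * u * (σ ^ l)⁻¹ ∈ X := hN.conj_mem _ hu _
      have h9 : u⁻¹ * σ ^ l * u * (σ ^ l)⁻¹ = u⁻¹ * (σ ^ l * u * (σ ^ l)⁻¹) := by group
      rw [h9]
      exact mul_mem (inv_mem hu) h8
    · -- y commutes with σ^(m/k)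
      have hz3 : u * σ ^ (m / k) * u⁻¹ = v * σ ^ (m / k) := by
        calc u * σ ^ (m / k) * u⁻¹
            = u * (u⁻¹ * (v * σ ^ (m / k)) * u) * u⁻¹ := by rw [huz]
          _ = v * σ ^ (m / k) := by group
      have hP : (u⁻¹ * σ ^ l * u) * σ ^ (m / k) = σ ^ (m / k) * (u⁻¹ * σ ^ l * u) := by
        calc (u⁻¹ * σ ^ l * u) * σ ^ (m / k)
            = u⁻¹ * (σ ^ l * (u * σ ^ (m / k) * u⁻¹)) * u := by group
          _ = u⁻¹ * (σ ^ l * (v * σ ^ (m / k))) * u := by rw [hz3]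
          _ = u⁻¹ * (v * σ ^ (m / k) * σ ^ l) * u := by rw [← hzσl]
          _ = (u⁻¹ * (v * σ ^ (m / k)) * u) * (u⁻¹ * σ ^ l * u) := by group
          _ = σ ^ (m / k) * (u⁻¹ * σ ^ l * u) := by rw [huz]
      have hil : (σ ^ l)⁻¹ * σ ^ (m / k) = σ ^ (m / k) * (σ ^ l)⁻¹ := by
        calc (σ ^ l)⁻¹ * σ ^ (m / k)
            = (σ ^ l)⁻¹ * (σ ^ (m / k) * σ ^ l) * (σ ^ l)⁻¹ := by group
          _ = (σ ^ l)⁻¹ * (σ ^ l * σ ^ (m / k)) * (σ ^ l)⁻¹ := by rw [hσcomm]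
          _ = σ ^ (m / k) * (σ ^ l)⁻¹ := by group
      calc (u⁻¹ * σ ^ l * u * (σ ^ l)⁻¹) * σ ^ (m / k)
          = (u⁻¹ * σ ^ l * u) * ((σ ^ l)⁻¹ * σ ^ (m / k)) := by group
        _ = (u⁻¹ * σ ^ l * u) * (σ ^ (m / k) * (σ ^ l)⁻¹) := by rw [hil]
        _ = ((u⁻¹ * σ ^ l * u) * σ ^ (m / k)) * (σ ^ l)⁻¹ := by group
        _ = (σ ^ (m / k) * (u⁻¹ * σ ^ l * u)) * (σ ^ l)⁻¹ := by rw [hP]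
        _ = σ ^ (m / k) * (u⁻¹ * σ ^ l * u * (σ ^ l)⁻¹) := by group
    · -- c⁻¹ g c = y σ^l
      have hd2 : d⁻¹ * σ ^ l * d = σ ^ l := by
        calc d⁻¹ * σ ^ l * d = d⁻¹ * (σ ^ l * d) := by group
          _ = d⁻¹ * (d * σ ^ l) := by rw [← hdσ]
          _ = σ ^ l := by group
      calc (a * d * u)⁻¹ * (a * σ ^ l * a⁻¹) * (a * d * u)
          = u⁻¹ * (d⁻¹ * σ ^ l * d) * u := by group
        _ = u⁻¹ * σ ^ l * u := by rw [hd2]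
        _ = u⁻¹ * σ ^ l * u * (σ ^ l)⁻¹ * σ ^ l := by group
end

section
/- Let L be a group, let X be a normal subgroup of L all of whose elements have finite order, and let σ ∈ L; assume that for every integer j ≥ 1, every element of the coset X·σ^j is conjugate to σ^j by an element of X (the Lang property). Let e, k ≥ 1 be coprime integers and let y ∈ X with σ^k y = y σ^k. Then y is conjugate by an element of X to an element of X_σ if and only if there exist z ∈ X·σ^e with z σ^k = σ^k z and c ∈ X such that c⁻¹ y c = z^k σ^{-ek}. -/
private theorem conj_pow_aux_s10 {G : Type*} [Group G] (u g : G) (n : ℕ) :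
    (u⁻¹ * g * u) ^ n = u⁻¹ * g ^ n * u := by
  induction n with
  | zero => simp
  | succ n ih => rw [pow_succ, ih, pow_succ]; group

private theorem conj_pow_aux'_s10 {G : Type*} [Group G] (u g : G) (n : ℕ) :
    (u * g * u⁻¹) ^ n = u * g ^ n * u⁻¹ := by
  induction n with
  | zero => simp
  | succ n ih => rw [pow_succ, ih, pow_succ]; group

/-- Abstract form of Lemma 2.7: for coprime `e, k ≥ 1` and `y ∈ X` commuting with
`σ^k`, the element `y` is `X`-conjugate to an element of `X_σ` if and only if `y` is
`X`-conjugate to the `k`-th power `z^k σ^{-ek}` (computed in the abstract extension)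
of an element `z` of the coset `X·σ^e` commuting with `σ^k`. -/
theorem shintani_subfield_power (L : Type) [Group L] (X : Subgroup L) [X.Normal]
    (hfin : ∀ x ∈ X, IsOfFinOrder x) (σ : L)
    (hLang : ∀ j : ℕ, 1 ≤ j → ∀ x ∈ X, ∃ u ∈ X, u⁻¹ * (x * σ ^ j) * u = σ ^ j)
    (e k : ℕ) (he : 1 ≤ e) (hk : 1 ≤ k) (hek : Nat.Coprime e k)
    (y : L) (hy : y ∈ X) (hyk : σ ^ k * y = y * σ ^ k) :
    (∃ c ∈ X, (c⁻¹ * y * c) * σ = σ * (c⁻¹ * y * c)) ↔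
    (∃ z : L, (∃ v ∈ X, z = v * σ ^ e) ∧ z * σ ^ k = σ ^ k * z ∧
        ∃ c ∈ X, c⁻¹ * y * c = z ^ k * (σ ^ (e * k))⁻¹) := by
  -- Bezout: e*a + k*b = 1 over ℤ
  obtain ⟨a, b, hab⟩ : ∃ a b : ℤ, (e : ℤ) * a + (k : ℤ) * b = 1 := by
    refine ⟨Nat.gcdA e k, Nat.gcdB e k, ?_⟩
    have h := Nat.gcd_eq_gcd_ab e k
    rw [hek] at h
    push_cast at h ⊢
    linarith
  constructor
  · rintro ⟨c₀, hc₀X, hc₀⟩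
    set w : L := c₀⁻¹ * y * c₀ with hw_def
    have hwX : w ∈ X := by
      have hrw : w = c₀⁻¹ * y * (c₀⁻¹)⁻¹ := by rw [hw_def]; group
      rw [hrw]
      exact Subgroup.Normal.conj_mem ‹X.Normal› y hy c₀⁻¹
    have hwσ : Commute w σ := hc₀
    -- Lang at exponent k applied to w^(-a)
    obtain ⟨u, huX, hu⟩ := hLang k hk (w ^ (-a)) (X.zpow_mem hwX (-a))
    have hu' : w ^ (-a) * σ ^ k = u * σ ^ k * u⁻¹ := by
      conv_rhs => rw [← hu]
      group
    set z : L := u⁻¹ * (w ^ b * σ ^ e) * u with hz_def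
    have hcomm1 : Commute (w ^ b * σ ^ e) (w ^ (-a) * σ ^ k) := by
      refine Commute.mul_right ?_ ?_
      · exact Commute.mul_left ((Commute.refl w).zpow_zpow b (-a))
          ((hwσ.symm.zpow_right (-a)).pow_left e)
      · exact Commute.mul_left ((hwσ.zpow_left b).pow_right k)
          ((Commute.refl σ).pow_pow e k)
    have hzσk : z * σ ^ k = σ ^ k * z := by
      calc z * σ ^ k = u⁻¹ * ((w ^ b * σ ^ e) * (u * σ ^ k * u⁻¹)) * u := by
            rw [hz_def]; group
        _ = u⁻¹ * ((w ^ b * σ ^ e) * (w ^ (-a) * σ ^ k)) * u := by rw [← hu']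
        _ = u⁻¹ * ((w ^ (-a) * σ ^ k) * (w ^ b * σ ^ e)) * u := by rw [hcomm1.eq]
        _ = u⁻¹ * ((u * σ ^ k * u⁻¹) * (w ^ b * σ ^ e)) * u := by rw [← hu']
        _ = σ ^ k * z := by rw [hz_def]; group
    have hvX : z * (σ ^ e)⁻¹ ∈ X := by
      have hrw : z * (σ ^ e)⁻¹ = (u⁻¹ * w ^ b) * (σ ^ e * u * (σ ^ e)⁻¹) := by
        rw [hz_def]; group
      rw [hrw]
      exact X.mul_mem (X.mul_mem (X.inv_mem huX) (X.zpow_mem hwX b))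
        (Subgroup.Normal.conj_mem ‹X.Normal› u huX (σ ^ e))
    refine ⟨z, ⟨z * (σ ^ e)⁻¹, hvX, by group⟩, hzσk, c₀ * u, X.mul_mem hc₀X huX, ?_⟩
    -- z^k = u⁻¹ * ((w^b)^k * (σ^e)^k) * u
    have hzk' : z ^ k = u⁻¹ * ((w ^ b) ^ k * (σ ^ e) ^ k) * u := by
      rw [hz_def, conj_pow_aux_s10, Commute.mul_pow ((hwσ.zpow_left b).pow_right e) k]
    have hSe : (σ ^ e) ^ k = (σ ^ k) ^ e := by
      rw [← pow_mul, ← pow_mul, Nat.mul_comm]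
    have hS : σ ^ (e * k) = (σ ^ k) ^ e := by rw [← pow_mul, Nat.mul_comm]
    -- conjugation of S := (σ^k)^e by u
    have hU : (w ^ (-a)) ^ e * (σ ^ k) ^ e = u * (σ ^ k) ^ e * u⁻¹ := by
      rw [← Commute.mul_pow ((hwσ.zpow_left (-a)).pow_right k) e, hu', conj_pow_aux'_s10]
    have hSu : (σ ^ k) ^ e * u * ((σ ^ k) ^ e)⁻¹ = ((w ^ (-a)) ^ e)⁻¹ * u := by
      have h1 : u * (σ ^ k) ^ e = ((w ^ (-a)) ^ e * (σ ^ k) ^ e) * u := by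
        rw [hU]; group
      have h2 : (σ ^ k) ^ e * u = ((w ^ (-a)) ^ e)⁻¹ * (u * (σ ^ k) ^ e) := by
        rw [h1]; group
      rw [h2]; group
    have hpow : (w ^ b) ^ k * ((w ^ (-a)) ^ e)⁻¹ = w := by
      rw [← zpow_natCast (w ^ b) k, ← zpow_natCast (w ^ (-a)) e, ← zpow_mul, ← zpow_mul,
        ← zpow_neg, ← zpow_add]
      rw [show b * (k : ℤ) + -(-a * (e : ℤ)) = 1 from by linear_combination hab]
      exact zpow_one w
    have lhs : (c₀ * u)⁻¹ * y * (c₀ * u) = u⁻¹ * w * u := by rw [hw_def]; group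
    rw [lhs, hzk', hSe, hS]
    have hrhs : (u⁻¹ * ((w ^ b) ^ k * (σ ^ k) ^ e) * u) * ((σ ^ k) ^ e)⁻¹ =
        u⁻¹ * (w ^ b) ^ k * ((σ ^ k) ^ e * u * ((σ ^ k) ^ e)⁻¹) := by group
    rw [hrhs, hSu]
    have hfin2 : u⁻¹ * (w ^ b) ^ k * (((w ^ (-a)) ^ e)⁻¹ * u) =
        u⁻¹ * ((w ^ b) ^ k * ((w ^ (-a)) ^ e)⁻¹) * u := by group
    rw [hfin2, hpow]
  · rintro ⟨z, ⟨v, hvX, hzv⟩, hzk, c, hcX, hc⟩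
    have hzc : Commute z (σ ^ k) := hzk
    set w' : L := z ^ k * (σ ^ (e * k))⁻¹ with hw'_def
    have hzek : Commute z (σ ^ (e * k)) := by
      have hrw : σ ^ (e * k) = (σ ^ k) ^ e := by rw [← pow_mul, Nat.mul_comm]
      rw [hrw]; exact hzc.pow_right e
    have hw'z : Commute w' z :=
      Commute.mul_left ((Commute.refl z).pow_left k) hzek.symm.inv_left
    have hw'σk : Commute w' (σ ^ k) :=
      Commute.mul_left (hzc.pow_left k) ((Commute.refl σ).pow_pow (e * k) k).inv_left
    set t : L := z ^ a * (σ ^ k) ^ b with ht_def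
    have hw't : Commute w' t := Commute.mul_right (hw'z.zpow_right a) (hw'σk.zpow_right b)
    have hxX : t * σ⁻¹ ∈ X := by
      refine (QuotientGroup.eq_one_iff _).1 ?_
      have hz1 : ((z : L) : L ⧸ X) = ((σ : L ⧸ X)) ^ e := by
        rw [hzv, QuotientGroup.mk_mul, (QuotientGroup.eq_one_iff v).2 hvX, one_mul,
          QuotientGroup.mk_pow]
      rw [QuotientGroup.mk_mul, ht_def, QuotientGroup.mk_mul, QuotientGroup.mk_zpow,
        QuotientGroup.mk_zpow, QuotientGroup.mk_pow, QuotientGroup.mk_inv, hz1]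
      rw [← zpow_natCast ((σ : L ⧸ X)) e, ← zpow_natCast ((σ : L ⧸ X)) k,
        ← zpow_mul, ← zpow_mul, ← zpow_add, hab]
      simp
    obtain ⟨u, huX, hu⟩ := hLang 1 le_rfl (t * σ⁻¹) hxX
    rw [pow_one] at hu
    have hu2 : u⁻¹ * t * u = σ := by rw [← hu]; group
    refine ⟨c * u, X.mul_mem hcX huX, ?_⟩
    have hcyc : (c * u)⁻¹ * y * (c * u) = u⁻¹ * w' * u := by
      rw [← hc]; group
    rw [hcyc, ← hu2]
    calc (u⁻¹ * w' * u) * (u⁻¹ * t * u) = u⁻¹ * (w' * t) * u := by group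
      _ = u⁻¹ * (t * w') * u := by rw [hw't.eq]
      _ = (u⁻¹ * t * u) * (u⁻¹ * w' * u) := by group
end

section
/- Let L be a group, let X be a normal subgroup of L, and let σ ∈ L; assume that for every integer j ≥ 1, every element of the coset X·σ^j is conjugate to σ^j by an element of X (the Lang property). Let l, m be positive integers with l dividing m, and let k be a prime divisor of m with k dividing m/l. Let a ∈ X, set g = a σ^l a⁻¹ and h = a⁻¹ σ^m a, assume g σ^m = σ^m g, and set w = a⁻¹ σ^m a σ^{-m} (so that w ∈ X_{σ^l}). Then there exists c ∈ X with c σ^m = σ^m c such that c⁻¹ g c ∈ X_{σ^{m/k}}·σ^l if and only if there exists z ∈ X_{σ^l} with w = z^k. -/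
private lemma aux_conj_comm {G : Type} [Group G] {p q : G} (r : G) (h : p * q = q * p) :
    (r * p * r⁻¹) * (r * q * r⁻¹) = (r * q * r⁻¹) * (r * p * r⁻¹) := by
  have h1 : (r * p * r⁻¹) * (r * q * r⁻¹) = r * (p * q) * r⁻¹ := by group
  have h2 : (r * q * r⁻¹) * (r * p * r⁻¹) = r * (q * p) * r⁻¹ := by group
  rw [h1, h2, h]

/-- Abstract form of Corollary 2.8(i): when the prime `k` divides `m/l`, the element
`g = a σ^l a⁻¹` lies in an `X_{σ^m}`-conjugate of `X_{σ^{m/k}}·σ^l` if and only if its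
Shintani image `w = a⁻¹ σ^m a σ^{-m} ∈ X_{σ^l}` is a `k`-th power in `X_{σ^l}`. -/
theorem shintani_subfields_dividing (L : Type) [Group L] (X : Subgroup L) [X.Normal]
    (σ : L)
    (hLang : ∀ j : ℕ, 1 ≤ j → ∀ x ∈ X, ∃ u ∈ X, u⁻¹ * (x * σ ^ j) * u = σ ^ j)
    (l m : ℕ) (hl : 0 < l) (hm : 0 < m) (hlm : l ∣ m)
    (k : ℕ) (hk : k.Prime) (hkm : k ∣ m) (hkml : k ∣ m / l)
    (a : L) (ha : a ∈ X)
    (hg : (a * σ ^ l * a⁻¹) * σ ^ m = σ ^ m * (a * σ ^ l * a⁻¹)) :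
    (∃ c ∈ X, c * σ ^ m = σ ^ m * c ∧
        ∃ y ∈ X, y * σ ^ (m / k) = σ ^ (m / k) * y ∧
          c⁻¹ * (a * σ ^ l * a⁻¹) * c = y * σ ^ l) ↔
    (∃ z ∈ X, z * σ ^ l = σ ^ l * z ∧
        a⁻¹ * σ ^ m * a * (σ ^ m)⁻¹ = z ^ k) := by
  have hkpos : 0 < k := hk.pos
  obtain ⟨t, hmt⟩ : ∃ t, m = k * (l * t) := by
    obtain ⟨t, ht⟩ := hkml
    refine ⟨t, ?_⟩
    have h1 : m / l * l = m := Nat.div_mul_cancel hlm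
    rw [ht] at h1
    rw [← h1]; ring
  have hmk : m / k = l * t := by rw [hmt]; exact Nat.mul_div_cancel_left _ hkpos
  rw [hmk]
  have hnpos : 0 < l * t := by
    rcases Nat.eq_zero_or_pos (l * t) with h | h
    · rw [h, Nat.mul_zero] at hmt; omega
    · exact h
  have hσnm : (σ ^ (l * t)) ^ k = σ ^ m := by
    rw [← pow_mul]; congr 1; rw [hmt]; ring
  -- commuting with σ^l implies commuting with σ^(l*t)
  have hcomm_ln : ∀ x : L, x * σ ^ l = σ ^ l * x → x * σ ^ (l * t) = σ ^ (l * t) * x := by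
    intro x hx
    have h : Commute x (σ ^ l) := hx
    have h2 := h.pow_right t
    rwa [← pow_mul] at h2
  have hcomm_lm : ∀ x : L, x * σ ^ l = σ ^ l * x → x * σ ^ m = σ ^ m * x := by
    intro x hx
    have h : Commute x (σ ^ l) := hx
    have h2 := h.pow_right (t * k)
    rw [← pow_mul] at h2
    rwa [show l * (t * k) = m from by rw [hmt]; ring] at h2
  constructor
  · rintro ⟨c, hcX, hcσ, y, hyX, hyσ, hconj⟩
    obtain ⟨u, huX, hu⟩ := hLang l hl y hyX
    have hyu : u * σ ^ l * u⁻¹ = y * σ ^ l := by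
      conv_lhs => rw [← hu]
      group
    set s : L := u⁻¹ * σ ^ (l * t) * u * (σ ^ (l * t))⁻¹ with hs
    have hsX : s ∈ X := by
      have h1 : s = u⁻¹ * (σ ^ (l * t) * u * (σ ^ (l * t))⁻¹) := by rw [hs]; group
      rw [h1]
      exact mul_mem (inv_mem huX) (‹X.Normal›.conj_mem u huX (σ ^ (l * t)))
    -- σ^(l*t) commutes with y * σ^l
    have h1 : σ ^ (l * t) * (y * σ ^ l) = (y * σ ^ l) * σ ^ (l * t) := by
      calc σ ^ (l * t) * (y * σ ^ l) = (σ ^ (l * t) * y) * σ ^ l := by group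
        _ = (y * σ ^ (l * t)) * σ ^ l := by rw [← hyσ]
        _ = (y * σ ^ l) * σ ^ (l * t) := by group
    have h2 := aux_conj_comm (u⁻¹) h1
    simp only [inv_inv] at h2
    rw [hu] at h2
    -- h2 : (u⁻¹ * σ^(l*t) * u) * σ^l = σ^l * (u⁻¹ * σ^(l*t) * u)
    have hsl : s * σ ^ l = σ ^ l * s := by
      calc s * σ ^ l = (u⁻¹ * σ ^ (l * t) * u) * σ ^ l * (σ ^ (l * t))⁻¹ := by rw [hs]; group
        _ = σ ^ l * (u⁻¹ * σ ^ (l * t) * u) * (σ ^ (l * t))⁻¹ := by rw [h2]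
        _ = σ ^ l * s := by rw [hs]; group
    have hsn : Commute s (σ ^ (l * t)) := hcomm_ln s hsl
    have e2 : u⁻¹ * σ ^ (l * t) * u = s * σ ^ (l * t) := by rw [hs]; group
    have e4 : u⁻¹ * σ ^ m * u = s ^ k * σ ^ m := by
      calc u⁻¹ * σ ^ m * u = u⁻¹ * (σ ^ (l * t)) ^ k * u := by rw [hσnm]
        _ = (u⁻¹ * σ ^ (l * t) * u) ^ k := by
            rw [show (u⁻¹ * σ ^ (l * t) * u) ^ k = u⁻¹ * (σ ^ (l * t)) ^ k * u⁻¹⁻¹ from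
              by rw [show u⁻¹ * σ ^ (l * t) * u = u⁻¹ * σ ^ (l * t) * u⁻¹⁻¹ from by rw [inv_inv]];
                 exact conj_pow]
            rw [inv_inv]
        _ = (s * σ ^ (l * t)) ^ k := by rw [e2]
        _ = s ^ k * (σ ^ (l * t)) ^ k := hsn.mul_pow k
        _ = s ^ k * σ ^ m := by rw [hσnm]
    have hh1 : a * σ ^ l * a⁻¹ = c * (y * σ ^ l) * c⁻¹ := by
      rw [← hconj]; group
    have hgv : (c * u) * σ ^ l * (c * u)⁻¹ = a * σ ^ l * a⁻¹ := by
      calc (c * u) * σ ^ l * (c * u)⁻¹ = c * (u * σ ^ l * u⁻¹) * c⁻¹ := by group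
        _ = c * (y * σ ^ l) * c⁻¹ := by rw [hyu]
        _ = a * σ ^ l * a⁻¹ := hh1.symm
    set d : L := a⁻¹ * (c * u) with hd
    have hdX : d ∈ X := mul_mem (inv_mem ha) (mul_mem hcX huX)
    have hd1 : d * σ ^ l * d⁻¹ = σ ^ l := by
      calc d * σ ^ l * d⁻¹ = a⁻¹ * ((c * u) * σ ^ l * (c * u)⁻¹) * a := by rw [hd]; group
        _ = a⁻¹ * (a * σ ^ l * a⁻¹) * a := by rw [hgv]
        _ = σ ^ l := by group
    have hdl : d * σ ^ l = σ ^ l * d := by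
      conv_rhs => rw [← hd1]
      group
    have hdm : d * σ ^ m = σ ^ m * d := hcomm_lm d hdl
    have hcm : c⁻¹ * σ ^ m * c = σ ^ m := by
      rw [mul_assoc, ← hcσ]; group
    have e5 : (c * u)⁻¹ * σ ^ m * (c * u) = s ^ k * σ ^ m := by
      calc (c * u)⁻¹ * σ ^ m * (c * u) = u⁻¹ * (c⁻¹ * σ ^ m * c) * u := by group
        _ = u⁻¹ * σ ^ m * u := by rw [hcm]
        _ = s ^ k * σ ^ m := e4
    have ha' : a = (c * u) * d⁻¹ := by rw [hd]; group
    refine ⟨d * s * d⁻¹, ‹X.Normal›.conj_mem s hsX d, ?_, ?_⟩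
    · have := aux_conj_comm d hsl
      rw [hd1] at this
      exact this
    · have e6 : a⁻¹ * σ ^ m * a = d * (s ^ k * σ ^ m) * d⁻¹ := by
        conv_lhs => rw [ha']
        calc ((c * u) * d⁻¹)⁻¹ * σ ^ m * ((c * u) * d⁻¹)
            = d * ((c * u)⁻¹ * σ ^ m * (c * u)) * d⁻¹ := by group
          _ = d * (s ^ k * σ ^ m) * d⁻¹ := by rw [e5]
      have hdm' : d⁻¹ * (σ ^ m)⁻¹ = (σ ^ m)⁻¹ * d⁻¹ := by
        have := congrArg (fun x => x⁻¹) hdm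
        simpa [mul_inv_rev] using this.symm
      calc a⁻¹ * σ ^ m * a * (σ ^ m)⁻¹ = d * (s ^ k * σ ^ m) * d⁻¹ * (σ ^ m)⁻¹ := by rw [e6]
        _ = d * s ^ k * (σ ^ m * (d⁻¹ * (σ ^ m)⁻¹)) := by group
        _ = d * s ^ k * (σ ^ m * ((σ ^ m)⁻¹ * d⁻¹)) := by rw [hdm']
        _ = d * s ^ k * d⁻¹ := by group
        _ = (d * s * d⁻¹) ^ k := (conj_pow).symm
  · rintro ⟨z, hzX, hzl, hw⟩
    obtain ⟨u, huX, hu⟩ := hLang (l * t) hnpos z hzX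
    have key : u * σ ^ (l * t) * u⁻¹ = z * σ ^ (l * t) := by
      conv_lhs => rw [← hu]
      group
    have hzn : z * σ ^ (l * t) = σ ^ (l * t) * z := hcomm_ln z hzl
    have hum : u * σ ^ m * u⁻¹ = z ^ k * σ ^ m := by
      calc u * σ ^ m * u⁻¹ = u * (σ ^ (l * t)) ^ k * u⁻¹ := by rw [hσnm]
        _ = (u * σ ^ (l * t) * u⁻¹) ^ k := conj_pow.symm
        _ = (z * σ ^ (l * t)) ^ k := by rw [key]
        _ = z ^ k * (σ ^ (l * t)) ^ k := (show Commute z (σ ^ (l * t)) from hzn).mul_pow k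
        _ = z ^ k * σ ^ m := by rw [hσnm]
    have hw' : a⁻¹ * σ ^ m * a = z ^ k * σ ^ m := by
      rw [← hw]; group
    refine ⟨a * u, mul_mem ha huX, ?_, u⁻¹ * σ ^ l * u * (σ ^ l)⁻¹, ?_, ?_, ?_⟩
    · calc a * u * σ ^ m = a * (u * σ ^ m * u⁻¹) * u := by group
        _ = a * (z ^ k * σ ^ m) * u := by rw [hum]
        _ = a * (a⁻¹ * σ ^ m * a) * u := by rw [← hw']
        _ = σ ^ m * (a * u) := by group
    · have h1 : u⁻¹ * σ ^ l * u * (σ ^ l)⁻¹ = u⁻¹ * (σ ^ l * u * (σ ^ l)⁻¹) := by group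
      rw [h1]
      exact mul_mem (inv_mem huX) (‹X.Normal›.conj_mem u huX (σ ^ l))
    · have hy1 : (u⁻¹ * σ ^ l * u * (σ ^ l)⁻¹) * σ ^ (l * t) * (u⁻¹ * σ ^ l * u * (σ ^ l)⁻¹)⁻¹
          = σ ^ (l * t) := by
        calc (u⁻¹ * σ ^ l * u * (σ ^ l)⁻¹) * σ ^ (l * t) * (u⁻¹ * σ ^ l * u * (σ ^ l)⁻¹)⁻¹
            = u⁻¹ * σ ^ l * (u * σ ^ (l * t) * u⁻¹) * (σ ^ l)⁻¹ * u := by group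
          _ = u⁻¹ * σ ^ l * (z * σ ^ (l * t)) * (σ ^ l)⁻¹ * u := by rw [key]
          _ = u⁻¹ * (σ ^ l * z) * σ ^ (l * t) * (σ ^ l)⁻¹ * u := by group
          _ = u⁻¹ * (z * σ ^ l) * σ ^ (l * t) * (σ ^ l)⁻¹ * u := by rw [hzl]
          _ = u⁻¹ * (z * σ ^ (l * t)) * u := by group
          _ = u⁻¹ * (u * σ ^ (l * t) * u⁻¹) * u := by rw [key]
          _ = σ ^ (l * t) := by group
      conv_rhs => rw [← hy1]
      group
    · group
end

section
/- Let L be a group, let X be a normal subgroup of L all of whose elements have finite order, and let σ ∈ L; assume that for every integer j ≥ 1, every element of the coset X·σ^j is conjugate to σ^j by an element of X (the Lang property). Let l, m be positive integers with l dividing m, and let k be a prime divisor of m that does not divide m/l (so k divides l). Let a ∈ X, set g = a σ^l a⁻¹ and h = a⁻¹ σ^m a, assume g σ^m = σ^m g, and set w = a⁻¹ σ^m a σ^{-m} (so that w ∈ X_{σ^l}). Assume in addition that every X-conjugate of w that lies in X_{σ^l} is conjugate to w by an element of X_{σ^l}. Then there exists c ∈ X with c σ^m = σ^m c such that c⁻¹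 g c ∈ X_{σ^{m/k}}·σ^l if and only if there exists d ∈ X with d σ^l = σ^l d such that d⁻¹ w d ∈ X_{σ^{l/k}}. -/
private lemma aux_iter {G : Type*} [Group G] (p s x : G) (h : p * s = x * s * p)
    (hc : Commute x p) : ∀ i : ℕ, p ^ i * s = x ^ i * s * p ^ i := by
  intro i
  induction i with
  | zero => simp
  | succ n ih =>
    have hxp : p ^ n * x = x * p ^ n := ((hc.pow_right n).eq).symm
    calc p ^ (n+1) * s = p ^ n * (p * s) := by rw [pow_succ]; group
      _ = p ^ n * (x * s * p) := by rw [h]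
      _ = (p ^ n * x) * s * p := by group
      _ = (x * p ^ n) * s * p := by rw [hxp]
      _ = x * (p ^ n * s) * p := by group
      _ = x * (x ^ n * s * p ^ n) * p := by rw [ih]
      _ = x ^ (n+1) * s * p ^ (n+1) := by rw [pow_succ, pow_succ]; group

set_option maxHeartbeats 2000000 in
/-- Abstract form of Corollary 2.8(ii): when the prime `k` divides `m` but not `m/l`,
and the `X`-class of the Shintani image `w = a⁻¹ σ^m a σ^{-m}` meets `X_{σ^l}` in a
single `X_{σ^l}`-class, the element `g = a σ^l a⁻¹` lies in an `X_{σ^m}`-conjugate of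
`X_{σ^{m/k}}·σ^l` if and only if `w` lies in an `X_{σ^l}`-conjugate of `X_{σ^{l/k}}`. -/
theorem shintani_subfields_nondividing (L : Type) [Group L] (X : Subgroup L) [X.Normal]
    (hfin : ∀ x ∈ X, IsOfFinOrder x) (σ : L)
    (hLang : ∀ j : ℕ, 1 ≤ j → ∀ x ∈ X, ∃ u ∈ X, u⁻¹ * (x * σ ^ j) * u = σ ^ j)
    (l m : ℕ) (hl : 0 < l) (hm : 0 < m) (hlm : l ∣ m)
    (k : ℕ) (hk : k.Prime) (hkm : k ∣ m) (hkml : ¬ k ∣ m / l)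
    (a : L) (ha : a ∈ X)
    (hg : (a * σ ^ l * a⁻¹) * σ ^ m = σ ^ m * (a * σ ^ l * a⁻¹))
    (hstable : ∀ c ∈ X,
      (c⁻¹ * (a⁻¹ * σ ^ m * a * (σ ^ m)⁻¹) * c) * σ ^ l =
          σ ^ l * (c⁻¹ * (a⁻¹ * σ ^ m * a * (σ ^ m)⁻¹) * c) →
        ∃ d ∈ X, d * σ ^ l = σ ^ l * d ∧
          d⁻¹ * (a⁻¹ * σ ^ m * a * (σ ^ m)⁻¹) * d =
            c⁻¹ * (a⁻¹ * σ ^ m * a * (σ ^ m)⁻¹) * c) :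
    (∃ c ∈ X, c * σ ^ m = σ ^ m * c ∧
        ∃ y ∈ X, y * σ ^ (m / k) = σ ^ (m / k) * y ∧
          c⁻¹ * (a * σ ^ l * a⁻¹) * c = y * σ ^ l) ↔
    (∃ d ∈ X, d * σ ^ l = σ ^ l * d ∧
        (d⁻¹ * (a⁻¹ * σ ^ m * a * (σ ^ m)⁻¹) * d) * σ ^ (l / k) =
          σ ^ (l / k) * (d⁻¹ * (a⁻¹ * σ ^ m * a * (σ ^ m)⁻¹) * d)) := by
  have hk0 : 0 < k := hk.pos
  have hμ : l * (m / l) = m := Nat.mul_div_cancel' hlm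
  have hkl : k ∣ l := by
    have h1 : k ∣ l * (m / l) := by rw [hμ]; exact hkm
    exact ((Nat.Prime.dvd_mul hk).mp h1).resolve_right hkml
  have hmkk : m / k * k = m := Nat.div_mul_cancel hkm
  have hlkk : l / k * k = l := Nat.div_mul_cancel hkl
  have hlkμ : l / k * (m / l) = m / k := by
    apply Nat.eq_of_mul_eq_mul_right hk0
    rw [mul_right_comm, hlkk, hμ, hmkk]
  have hσm : (σ ^ (m / k)) ^ k = σ ^ m := by rw [← pow_mul, hmkk]
  have hσl : (σ ^ (l / k)) ^ k = σ ^ l := by rw [← pow_mul, hlkk]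
  have hσmk : (σ ^ (l / k)) ^ (m / l) = σ ^ (m / k) := by rw [← pow_mul, hlkμ]
  have hσlm : (σ ^ l) ^ (m / l) = σ ^ m := by rw [← pow_mul, hμ]
  have hlk1 : 1 ≤ l / k := (Nat.one_le_div_iff hk0).mpr (Nat.le_of_dvd hl hkl)
  have hmk1 : 1 ≤ m / k := (Nat.one_le_div_iff hk0).mpr (Nat.le_of_dvd hm hkm)
  -- Bezout data
  have hcop : Nat.Coprime k (m / l) := (Nat.Prime.coprime_iff_not_dvd hk).mpr hkml
  obtain ⟨A, B, hbez⟩ : ∃ A B : ℤ, (1 : ℤ) = (k : ℤ) * A + ((m / l : ℕ) : ℤ) * B := by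
    refine ⟨Nat.gcdA k (m / l), Nat.gcdB k (m / l), ?_⟩
    have h2 := Nat.gcd_eq_gcd_ab k (m / l)
    rwa [hcop, Nat.cast_one] at h2
  -- the Shintani image
  set w : L := a⁻¹ * σ ^ m * a * (σ ^ m)⁻¹ with hw_def
  have hwX : w ∈ X := by
    have h3 : w = a⁻¹ * (σ ^ m * a * (σ ^ m)⁻¹) := by rw [hw_def]; group
    rw [h3]
    exact X.mul_mem (X.inv_mem ha) (Subgroup.Normal.conj_mem ‹X.Normal› a ha (σ ^ m))
  have hwσm : w * σ ^ m = a⁻¹ * σ ^ m * a := by rw [hw_def]; group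
  have hAl : (a⁻¹ * σ ^ m * a) * σ ^ l = σ ^ l * (a⁻¹ * σ ^ m * a) := by
    calc (a⁻¹ * σ ^ m * a) * σ ^ l = a⁻¹ * (σ ^ m * (a * σ ^ l * a⁻¹)) * a := by group
      _ = a⁻¹ * ((a * σ ^ l * a⁻¹) * σ ^ m) * a := by rw [hg]
      _ = σ ^ l * (a⁻¹ * σ ^ m * a) := by group
  have hwl : w * σ ^ l = σ ^ l * w := by
    have hcml : (σ ^ m)⁻¹ * σ ^ l = σ ^ l * (σ ^ m)⁻¹ :=
      ((Commute.pow_pow_self σ m l).inv_left).eq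
    calc w * σ ^ l = (a⁻¹ * σ ^ m * a) * ((σ ^ m)⁻¹ * σ ^ l) := by rw [hw_def]; group
      _ = (a⁻¹ * σ ^ m * a) * (σ ^ l * (σ ^ m)⁻¹) := by rw [hcml]
      _ = ((a⁻¹ * σ ^ m * a) * σ ^ l) * (σ ^ m)⁻¹ := by group
      _ = (σ ^ l * (a⁻¹ * σ ^ m * a)) * (σ ^ m)⁻¹ := by rw [hAl]
      _ = σ ^ l * w := by rw [hw_def]; group
  constructor
  · -- forward direction
    rintro ⟨c, hcX, hcσ, y, hyX, hyσ, heq⟩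
    set b := c⁻¹ * a with hb_def
    have hbX : b ∈ X := X.mul_mem (X.inv_mem hcX) ha
    have hbl : b * σ ^ l * b⁻¹ = y * σ ^ l := by
      calc b * σ ^ l * b⁻¹ = c⁻¹ * (a * σ ^ l * a⁻¹) * c := by rw [hb_def]; group
        _ = y * σ ^ l := heq
    set t := b⁻¹ * σ ^ (m / k) * b with ht_def
    have hbl1 : b * σ ^ l = y * σ ^ l * b := by
      calc b * σ ^ l = (b * σ ^ l * b⁻¹) * b := by group
        _ = y * σ ^ l * b := by rw [hbl]
    have hbl2 : σ ^ l * b⁻¹ = b⁻¹ * (y * σ ^ l) := by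
      calc σ ^ l * b⁻¹ = b⁻¹ * ((b * σ ^ l) * b⁻¹) := by group
        _ = b⁻¹ * ((y * σ ^ l * b) * b⁻¹) := by rw [hbl1]
        _ = b⁻¹ * (y * σ ^ l) := by group
    have hmkl : σ ^ (m / k) * σ ^ l = σ ^ l * σ ^ (m / k) := (Commute.pow_pow_self σ (m/k) l).eq
    have htl : t * σ ^ l = σ ^ l * t := by
      calc t * σ ^ l = b⁻¹ * σ ^ (m/k) * (b * σ ^ l) := by rw [ht_def]; group
        _ = b⁻¹ * σ ^ (m/k) * (y * σ ^ l * b) := by rw [hbl1]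
        _ = b⁻¹ * (σ ^ (m/k) * y) * (σ ^ l * b) := by group
        _ = b⁻¹ * (y * σ ^ (m/k)) * (σ ^ l * b) := by rw [← hyσ]
        _ = b⁻¹ * y * (σ ^ (m/k) * σ ^ l) * b := by group
        _ = b⁻¹ * y * (σ ^ l * σ ^ (m/k)) * b := by rw [hmkl]
        _ = (b⁻¹ * (y * σ ^ l)) * (σ ^ (m/k) * b) := by group
        _ = (σ ^ l * b⁻¹) * (σ ^ (m/k) * b) := by rw [← hbl2]
        _ = σ ^ l * t := by rw [ht_def]; group
    have htlc : Commute t (σ ^ l) := htl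
    have htm : Commute t (σ ^ m) := by
      have h4 := htlc.pow_right (m / l)
      rwa [hσlm] at h4
    have htk : t ^ k = w * σ ^ m := by
      calc t ^ k = (b⁻¹ * σ ^ (m/k) * (b⁻¹)⁻¹) ^ k := by rw [ht_def, inv_inv]
        _ = b⁻¹ * (σ ^ (m/k)) ^ k * (b⁻¹)⁻¹ := conj_pow
        _ = b⁻¹ * σ ^ m * b := by rw [hσm, inv_inv]
        _ = a⁻¹ * (c * σ ^ m * c⁻¹) * a := by rw [hb_def]; group
        _ = a⁻¹ * σ ^ m * a := by rw [show c * σ ^ m * c⁻¹ = σ ^ m from by rw [hcσ]; group]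
        _ = w * σ ^ m := by rw [hwσm]
    have hwt : Commute w t := by
      have h1 : Commute t (t ^ k) := (Commute.refl t).pow_right k
      have h2 : Commute t ((σ ^ m)⁻¹) := htm.inv_right
      have h5 : w = t ^ k * (σ ^ m)⁻¹ := by rw [htk]; group
      have h3 : Commute t w := by rw [h5]; exact h1.mul_right h2
      exact h3.symm
    -- build s = t^B * σ^(A*l), an element of X·σ^(l/k) commuting with w
    set s := t ^ B * σ ^ (A * (l : ℤ)) with hs_def
    set vh := b⁻¹ * (σ ^ (((m / k : ℕ) : ℤ) * B) * b * (σ ^ (((m / k : ℕ) : ℤ) * B))⁻¹) with hvh_def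
    have hvhX : vh ∈ X :=
      X.mul_mem (X.inv_mem hbX) (Subgroup.Normal.conj_mem ‹X.Normal› b hbX _)
    have hz : ((m / k : ℕ) : ℤ) * B = ((l / k : ℕ) : ℤ) + (-A) * (l : ℤ) := by
      have hmk_cast : ((m / k : ℕ) : ℤ) = ((l / k : ℕ) : ℤ) * ((m / l : ℕ) : ℤ) := by
        exact_mod_cast (congrArg (fun n : ℕ => (n : ℤ)) hlkμ).symm
      have hlk_cast : ((l / k : ℕ) : ℤ) * (k : ℤ) = (l : ℤ) := by
        exact_mod_cast congrArg (fun n : ℕ => (n : ℤ)) hlkk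
      rw [hmk_cast, ← hlk_cast]
      linear_combination (-((l / k : ℕ) : ℤ)) * hbez
    have ht_zpow : t ^ B = b⁻¹ * σ ^ (((m / k : ℕ) : ℤ) * B) * b := by
      calc t ^ B = (b⁻¹ * σ ^ (m/k) * (b⁻¹)⁻¹) ^ B := by rw [ht_def, inv_inv]
        _ = b⁻¹ * (σ ^ (m/k)) ^ B * (b⁻¹)⁻¹ := conj_zpow
        _ = b⁻¹ * σ ^ (((m / k : ℕ) : ℤ) * B) * b := by
            rw [inv_inv, ← zpow_natCast σ (m/k), ← zpow_mul]
    have hsv : vh * σ ^ (l / k) = s := by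
      have hexp : (σ ^ (((m / k : ℕ) : ℤ) * B))⁻¹ * σ ^ (l / k) = σ ^ (A * (l : ℤ)) := by
        rw [← zpow_neg, ← zpow_natCast σ (l/k), ← zpow_add]
        congr 1
        linarith [hz]
      calc vh * σ ^ (l / k)
          = b⁻¹ * σ ^ (((m / k : ℕ) : ℤ) * B) * b *
              ((σ ^ (((m / k : ℕ) : ℤ) * B))⁻¹ * σ ^ (l / k)) := by rw [hvh_def]; group
        _ = b⁻¹ * σ ^ (((m / k : ℕ) : ℤ) * B) * b * σ ^ (A * (l : ℤ)) := by rw [hexp]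
        _ = s := by rw [hs_def, ht_zpow]
    have hws : w * s = s * w := by
      have h1 : Commute w (t ^ B) := hwt.zpow_right B
      have h2 : Commute w (σ ^ (A * (l : ℤ))) := by
        have h6 : Commute w (σ ^ l) := hwl
        have h7 := h6.zpow_right A
        rwa [← zpow_natCast σ l, ← zpow_mul, mul_comm (l : ℤ) A] at h7
      exact (h1.mul_right h2).eq
    obtain ⟨u, huX, hu⟩ := hLang (l / k) hlk1 vh hvhX
    rw [hsv] at hu
    have hes : (u⁻¹ * w * u) * σ ^ (l / k) = σ ^ (l / k) * (u⁻¹ * w * u) := by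
      calc (u⁻¹ * w * u) * σ ^ (l/k) = (u⁻¹ * w * u) * (u⁻¹ * s * u) := by rw [hu]
        _ = u⁻¹ * (w * s) * u := by group
        _ = u⁻¹ * (s * w) * u := by rw [hws]
        _ = (u⁻¹ * s * u) * (u⁻¹ * w * u) := by group
        _ = σ ^ (l/k) * (u⁻¹ * w * u) := by rw [hu]
    have hel : (u⁻¹ * w * u) * σ ^ l = σ ^ l * (u⁻¹ * w * u) := by
      have hc : Commute (u⁻¹ * w * u) (σ ^ (l/k)) := hes
      have h8 := hc.pow_right k
      rwa [hσl] at h8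
    obtain ⟨d, hdX, hdl, hdw⟩ := hstable u huX hel
    exact ⟨d, hdX, hdl, by rw [hdw]; exact hes⟩
  · -- reverse direction
    rintro ⟨d, hdX, hdl, hdw⟩
    set w' := d⁻¹ * w * d with hw'_def
    have hw'X : w' ∈ X := X.mul_mem (X.mul_mem (X.inv_mem hdX) hwX) hdX
    have hw'lk : Commute w' (σ ^ (l / k)) := hdw
    have hw'l : Commute w' (σ ^ l) := by
      have h1 := hw'lk.pow_right k; rwa [hσl] at h1
    have hw'mk : Commute w' (σ ^ (m / k)) := by
      have h1 := hw'lk.pow_right (m / l); rwa [hσmk] at h1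
    -- Lang at level l applied to (w'^B)⁻¹
    have hxX : (w' ^ B)⁻¹ ∈ X := X.inv_mem (X.zpow_mem hw'X B)
    obtain ⟨s, hsX, hs⟩ := hLang l hl _ hxX
    have hR1 : σ ^ l * s = w' ^ B * s * σ ^ l := by
      calc σ ^ l * s = w' ^ B * (s * (s⁻¹ * ((w' ^ B)⁻¹ * σ ^ l) * s)) := by group
        _ = w' ^ B * (s * σ ^ l) := by rw [hs]
        _ = w' ^ B * s * σ ^ l := by group
    have hR1' : σ ^ l * s⁻¹ = s⁻¹ * (w' ^ B)⁻¹ * σ ^ l := by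
      calc σ ^ l * s⁻¹ = s⁻¹ * (w' ^ B)⁻¹ * (w' ^ B * s * σ ^ l) * s⁻¹ := by group
        _ = s⁻¹ * (w' ^ B)⁻¹ * (σ ^ l * s) * s⁻¹ := by rw [← hR1]
        _ = s⁻¹ * (w' ^ B)⁻¹ * σ ^ l := by group
    have hRm : σ ^ m * s = (w' ^ B) ^ (m / l) * s * σ ^ m := by
      have hcomm : Commute (w' ^ B) (σ ^ l) := hw'l.zpow_left B
      have h1 := aux_iter (σ ^ l) s (w' ^ B) hR1 hcomm (m / l)
      rwa [hσlm] at h1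
    set t := s⁻¹ * (w' ^ A * σ ^ (m / k)) * s with ht_def
    have hpow_one : (w' ^ A) ^ k * (w' ^ B) ^ (m / l) = w' := by
      rw [← zpow_natCast (w' ^ A) k, ← zpow_natCast (w' ^ B) (m / l), ← zpow_mul, ← zpow_mul,
        ← zpow_add]
      rw [show A * (k : ℤ) + B * ((m / l : ℕ) : ℤ) = 1 from by linear_combination -hbez]
      exact zpow_one w'
    have htk : t ^ k = (s⁻¹ * w' * s) * σ ^ m := by
      have hcc : Commute (w' ^ A) (σ ^ (m / k)) := hw'mk.zpow_left A
      calc t ^ k = (s⁻¹ * (w' ^ A * σ ^ (m / k)) * (s⁻¹)⁻¹) ^ k := by rw [ht_def, inv_inv]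
        _ = s⁻¹ * (w' ^ A * σ ^ (m / k)) ^ k * (s⁻¹)⁻¹ := conj_pow
        _ = s⁻¹ * ((w' ^ A) ^ k * (σ ^ (m / k)) ^ k) * s := by rw [hcc.mul_pow, inv_inv]
        _ = s⁻¹ * (w' ^ A) ^ k * (σ ^ m * s) := by rw [hσm]; group
        _ = s⁻¹ * (w' ^ A) ^ k * ((w' ^ B) ^ (m / l) * s * σ ^ m) := by rw [hRm]
        _ = s⁻¹ * ((w' ^ A) ^ k * (w' ^ B) ^ (m / l)) * s * σ ^ m := by group
        _ = (s⁻¹ * w' * s) * σ ^ m := by rw [hpow_one]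
    have hABB : (w' ^ B)⁻¹ * w' ^ A * w' ^ B = w' ^ A := by
      rw [← zpow_neg, ← zpow_add, ← zpow_add]; congr 1; ring
    have htl : t * σ ^ l = σ ^ l * t := by
      have c1 : Commute (w' ^ A) (σ ^ l) := hw'l.zpow_left A
      have c2 : Commute (w' ^ B) (σ ^ (m / k)) := hw'mk.zpow_left B
      symm
      calc σ ^ l * t = (σ ^ l * s⁻¹) * (w' ^ A * σ ^ (m / k)) * s := by rw [ht_def]; group
        _ = (s⁻¹ * (w' ^ B)⁻¹ * σ ^ l) * (w' ^ A * σ ^ (m / k)) * s := by rw [hR1']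
        _ = s⁻¹ * (w' ^ B)⁻¹ * (σ ^ l * w' ^ A) * (σ ^ (m / k) * s) := by group
        _ = s⁻¹ * (w' ^ B)⁻¹ * (w' ^ A * σ ^ l) * (σ ^ (m / k) * s) := by rw [← c1.eq]
        _ = s⁻¹ * (w' ^ B)⁻¹ * w' ^ A * (σ ^ l * σ ^ (m / k)) * s := by group
        _ = s⁻¹ * (w' ^ B)⁻¹ * w' ^ A * (σ ^ (m / k) * σ ^ l) * s := by
            rw [(Commute.pow_pow_self σ l (m / k)).eq]
        _ = s⁻¹ * (w' ^ B)⁻¹ * w' ^ A * σ ^ (m / k) * (σ ^ l * s) := by group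
        _ = s⁻¹ * (w' ^ B)⁻¹ * w' ^ A * σ ^ (m / k) * (w' ^ B * s * σ ^ l) := by rw [hR1]
        _ = s⁻¹ * (w' ^ B)⁻¹ * w' ^ A * (σ ^ (m / k) * w' ^ B) * s * σ ^ l := by group
        _ = s⁻¹ * (w' ^ B)⁻¹ * w' ^ A * (w' ^ B * σ ^ (m / k)) * s * σ ^ l := by rw [c2.eq]
        _ = s⁻¹ * ((w' ^ B)⁻¹ * w' ^ A * w' ^ B) * σ ^ (m / k) * s * σ ^ l := by group
        _ = s⁻¹ * w' ^ A * σ ^ (m / k) * s * σ ^ l := by rw [hABB]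
        _ = t * σ ^ l := by rw [ht_def]; group
    -- Lang at level m/k
    have hvX : s⁻¹ * (w' ^ A * (σ ^ (m / k) * s * (σ ^ (m / k))⁻¹)) ∈ X :=
      X.mul_mem (X.inv_mem hsX)
        (X.mul_mem (X.zpow_mem hw'X A) (Subgroup.Normal.conj_mem ‹X.Normal› s hsX _))
    obtain ⟨u, huX, hu⟩ := hLang (m / k) hmk1 _ hvX
    have hvt : (s⁻¹ * (w' ^ A * (σ ^ (m / k) * s * (σ ^ (m / k))⁻¹))) * σ ^ (m / k) = t := by
      rw [ht_def]; group
    rw [hvt] at hu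
    have hut : u * σ ^ (m / k) * u⁻¹ = t := by
      calc u * σ ^ (m / k) * u⁻¹ = u * (u⁻¹ * t * u) * u⁻¹ := by rw [hu]
        _ = t := by group
    have hum : u * σ ^ m * u⁻¹ = (s⁻¹ * w' * s) * σ ^ m := by
      calc u * σ ^ m * u⁻¹ = (u * σ ^ (m / k) * u⁻¹) ^ k := by rw [conj_pow, hσm]
        _ = t ^ k := by rw [hut]
        _ = (s⁻¹ * w' * s) * σ ^ m := htk
    have hBwB : (w' ^ B)⁻¹ * w' * w' ^ B = w' := by
      have h1 : w' * w' ^ B = w' ^ B * w' := ((Commute.refl w').zpow_right B).eq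
      rw [mul_assoc, h1]; group
    have hW2l : (s⁻¹ * w' * s) * σ ^ l = σ ^ l * (s⁻¹ * w' * s) := by
      symm
      calc σ ^ l * (s⁻¹ * w' * s) = (σ ^ l * s⁻¹) * w' * s := by group
        _ = (s⁻¹ * (w' ^ B)⁻¹ * σ ^ l) * w' * s := by rw [hR1']
        _ = s⁻¹ * (w' ^ B)⁻¹ * (σ ^ l * w') * s := by group
        _ = s⁻¹ * (w' ^ B)⁻¹ * (w' * σ ^ l) * s := by rw [← hw'l.eq]
        _ = s⁻¹ * (w' ^ B)⁻¹ * w' * (σ ^ l * s) := by group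
        _ = s⁻¹ * (w' ^ B)⁻¹ * w' * (w' ^ B * s * σ ^ l) := by rw [hR1]
        _ = s⁻¹ * ((w' ^ B)⁻¹ * w' * w' ^ B) * s * σ ^ l := by group
        _ = (s⁻¹ * w' * s) * σ ^ l := by rw [hBwB]
    have hdsX : d * s ∈ X := X.mul_mem hdX hsX
    have hds_eq : (d * s)⁻¹ * w * (d * s) = s⁻¹ * w' * s := by rw [hw'_def]; group
    obtain ⟨dh, hdhX, hdhl, hdhw⟩ := hstable (d * s) hdsX (by rw [hds_eq]; exact hW2l)
    rw [hds_eq] at hdhw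
    have hdhm : dh * σ ^ m = σ ^ m * dh := by
      have h1 : Commute dh (σ ^ l) := hdhl
      have h2 := h1.pow_right (m / l)
      rwa [hσlm] at h2
    refine ⟨a * dh * u, X.mul_mem (X.mul_mem ha hdhX) huX, ?_,
      u⁻¹ * σ ^ l * u * (σ ^ l)⁻¹, ?_, ?_, ?_⟩
    · calc (a * dh * u) * σ ^ m = a * dh * (u * σ ^ m * u⁻¹) * u := by group
        _ = a * dh * ((s⁻¹ * w' * s) * σ ^ m) * u := by rw [hum]
        _ = a * dh * ((dh⁻¹ * w * dh) * σ ^ m) * u := by rw [hdhw]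
        _ = a * w * (dh * σ ^ m) * u := by group
        _ = a * w * (σ ^ m * dh) * u := by rw [hdhm]
        _ = a * (w * σ ^ m) * (dh * u) := by group
        _ = a * (a⁻¹ * σ ^ m * a) * (dh * u) := by rw [hwσm]
        _ = σ ^ m * (a * dh * u) := by group
    · have h1 := X.mul_mem (X.inv_mem huX) (Subgroup.Normal.conj_mem ‹X.Normal› u huX (σ ^ l))
      simpa [mul_assoc] using h1
    · have hcy : (u⁻¹ * σ ^ l * u) * σ ^ (m / k) = σ ^ (m / k) * (u⁻¹ * σ ^ l * u) := by
        calc (u⁻¹ * σ ^ l * u) * σ ^ (m / k) = (u⁻¹ * σ ^ l * u) * (u⁻¹ * t * u) := by rw [hu]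
          _ = u⁻¹ * (σ ^ l * t) * u := by group
          _ = u⁻¹ * (t * σ ^ l) * u := by rw [htl]
          _ = (u⁻¹ * t * u) * (u⁻¹ * σ ^ l * u) := by group
          _ = σ ^ (m / k) * (u⁻¹ * σ ^ l * u) := by rw [hu]
      have hmli : (σ ^ l)⁻¹ * σ ^ (m / k) = σ ^ (m / k) * (σ ^ l)⁻¹ :=
        (((Commute.pow_pow_self σ (m / k) l).inv_right).symm).eq
      calc (u⁻¹ * σ ^ l * u * (σ ^ l)⁻¹) * σ ^ (m / k)
          = (u⁻¹ * σ ^ l * u) * ((σ ^ l)⁻¹ * σ ^ (m / k)) := by group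
        _ = (u⁻¹ * σ ^ l * u) * (σ ^ (m / k) * (σ ^ l)⁻¹) := by rw [hmli]
        _ = ((u⁻¹ * σ ^ l * u) * σ ^ (m / k)) * (σ ^ l)⁻¹ := by group
        _ = (σ ^ (m / k) * (u⁻¹ * σ ^ l * u)) * (σ ^ l)⁻¹ := by rw [hcy]
        _ = σ ^ (m / k) * (u⁻¹ * σ ^ l * u * (σ ^ l)⁻¹) := by group
    · calc (a * dh * u)⁻¹ * (a * σ ^ l * a⁻¹) * (a * dh * u)
          = u⁻¹ * (dh⁻¹ * (σ ^ l * dh)) * u := by group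
        _ = u⁻¹ * (dh⁻¹ * (dh * σ ^ l)) * u := by rw [← hdhl]
        _ = (u⁻¹ * σ ^ l * u * (σ ^ l)⁻¹) * σ ^ l := by group
end

section
/- Let G be a finite group, let p be a prime, let w ∈ G be an element whose order is a power of p, and let x ∈ G with G generated by x and w. Let A be the subgroup of G generated by the conjugates x^{w^i} for 0 ≤ i ≤ p − 1 together with w^p. Suppose that A is abelian and that w ∉ A. Then A is a maximal subgroup of G containing x, and A is the unique maximal subgroup of G containing x. -/
/-- Group-theoretic core of Proposition 5.1: if `G = ⟨x, w⟩` with `w` a `p`-element,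
and the subgroup `A` generated by the conjugates `x^{w^i}` (`0 ≤ i ≤ p-1`) together
with `w^p` is abelian and does not contain `w`, then `A` is the unique maximal
subgroup of `G` containing `x`. -/
theorem unique_maximal_overgroup_abelian (G : Type) [Group G] [Finite G]
    (p : ℕ) (hp : p.Prime) (w x : G) (hw : ∃ n : ℕ, orderOf w = p ^ n)
    (hgen : Subgroup.closure {x, w} = ⊤)
    (A : Subgroup G)
    (hA : A = Subgroup.closure
      ({w ^ p} ∪ Set.range fun i : Fin p => (w ^ (i : ℕ))⁻¹ * x * w ^ (i : ℕ)))
    (hab : ∀ a ∈ A, ∀ b ∈ A, a * b = b * a)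
    (hwA : w ∉ A) :
    IsCoatom A ∧ x ∈ A ∧ ∀ M : Subgroup G, IsCoatom M → x ∈ M → M = A := by
  obtain ⟨n, hn⟩ := hw
  have hp1 : 0 < p := hp.pos
  have hord : w ^ p ^ n = 1 := by rw [← hn]; exact pow_orderOf_eq_one w
  set S : Set G := Set.range fun i : Fin p => (w ^ (i : ℕ))⁻¹ * x * w ^ (i : ℕ) with hS
  set B : Subgroup G := Subgroup.closure S with hB
  -- basic memberships
  have hgenA : ∀ i : Fin p, (w ^ (i : ℕ))⁻¹ * x * w ^ (i : ℕ) ∈ A := by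
    intro i; rw [hA]; exact Subgroup.subset_closure (Or.inr ⟨i, rfl⟩)
  have hSA : S ⊆ (A : Set G) := by rintro _ ⟨i, rfl⟩; exact hgenA i
  have hBA : B ≤ A := (Subgroup.closure_le A).mpr hSA
  have hxS : x ∈ S := ⟨⟨0, hp1⟩, by simp⟩
  have hxB : x ∈ B := Subgroup.subset_closure hxS
  have hxA : x ∈ A := hBA hxB
  have hwpA : w ^ p ∈ A := by rw [hA]; exact Subgroup.subset_closure (Or.inl rfl)
  have hcomm : w ^ p * x = x * w ^ p := hab (w ^ p) hwpA x hxA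
  have hfix : (w ^ p)⁻¹ * x * w ^ p = x := by
    rw [mul_assoc, ← hcomm, ← mul_assoc, inv_mul_cancel, one_mul]
  have hfixz : (w ^ ((p : ℕ) : ℤ))⁻¹ * x * w ^ ((p : ℕ) : ℤ) = x := by
    rw [zpow_natCast]; exact hfix
  have hfixz' : w ^ ((p : ℕ) : ℤ) * x * (w ^ ((p : ℕ) : ℤ))⁻¹ = x := by
    rw [zpow_natCast, hcomm, mul_assoc, mul_inv_cancel, mul_one]
  -- the ℤ-indexed conjugates
  set y : ℤ → G := fun k => (w ^ k)⁻¹ * x * w ^ k with hy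
  have hyshift : ∀ m k : ℤ, (w ^ k)⁻¹ * y m * w ^ k = y (m + k) := by
    intro m k; simp only [hy]; group
  have hw1 : w ^ ((p : ℤ) ^ n) = 1 := by
    have : ((p : ℤ) ^ n) = ((p ^ n : ℕ) : ℤ) := by push_cast; ring
    rw [this, zpow_natCast, hord]
  -- conjugation by w^(p*t) fixes x
  have hfixt : ∀ t : ℤ, (w ^ (((p : ℕ) : ℤ) * t))⁻¹ * x * w ^ (((p : ℕ) : ℤ) * t) = x := by
    intro t
    induction t using Int.induction_on with
    | zero => simp
    | succ t ih =>
      have e : (w ^ (((p : ℕ) : ℤ) * (t + 1)))⁻¹ * x * w ^ (((p : ℕ) : ℤ) * (t + 1))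
          = (w ^ (((p : ℕ) : ℤ) * t))⁻¹ * ((w ^ ((p : ℕ) : ℤ))⁻¹ * x * w ^ ((p : ℕ) : ℤ))
            * w ^ (((p : ℕ) : ℤ) * t) := by group
      rw [e, hfixz]; exact ih
    | pred t ih =>
      have e : (w ^ (((p : ℕ) : ℤ) * (-t - 1)))⁻¹ * x * w ^ (((p : ℕ) : ℤ) * (-t - 1))
          = (w ^ (((p : ℕ) : ℤ) * (-t)))⁻¹ * (w ^ ((p : ℕ) : ℤ) * x * (w ^ ((p : ℕ) : ℤ))⁻¹)
            * w ^ (((p : ℕ) : ℤ) * (-t)) := by group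
      rw [e, hfixz']; exact ih
  -- every y m lies in B
  have hyB : ∀ m : ℤ, y m ∈ B := by
    intro m
    have hpe : m % p + (p : ℤ) * (m / p) = m := Int.emod_add_mul_ediv m p
    have h1 : y m = y (m % p) := by
      conv_lhs => rw [← hpe]
      have e : y (m % p + (p : ℤ) * (m / p))
          = (w ^ ((m % p : ℤ)))⁻¹ * ((w ^ (((p : ℕ) : ℤ) * (m / p)))⁻¹ * x
            * w ^ (((p : ℕ) : ℤ) * (m / p))) * w ^ ((m % p : ℤ)) := by
        simp only [hy]; group
      rw [e, hfixt]
    have hr0 : 0 ≤ m % p := Int.emod_nonneg m (by exact_mod_cast hp.ne_zero)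
    have hrp : m % p < p := Int.emod_lt_of_pos m (by exact_mod_cast hp1)
    have hrlt : (m % p).toNat < p := by omega
    have hcast : (m % ↑p) = (((m % p).toNat : ℕ) : ℤ) := (Int.toNat_of_nonneg hr0).symm
    have h2 : y (m % p) = (w ^ ((m % p).toNat))⁻¹ * x * w ^ ((m % p).toNat) := by
      simp only [hy]
      conv_lhs => rw [hcast]
      rw [zpow_natCast]
    rw [h1, h2]
    exact Subgroup.subset_closure ⟨⟨(m % p).toNat, hrlt⟩, rfl⟩
  -- conjugation by powers of w preserves B
  have hconj : ∀ (k : ℤ) (h : G), h ∈ B → (w ^ k)⁻¹ * h * w ^ k ∈ B := by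
    intro k h hh
    refine Subgroup.closure_induction (p := fun g _ => (w ^ k)⁻¹ * g * w ^ k ∈ B)
      ?_ ?_ ?_ ?_ hh
    · rintro g ⟨i, rfl⟩
      show _ ∈ B
      have e1 : (w ^ k)⁻¹ * ((w ^ (i : ℕ))⁻¹ * x * w ^ (i : ℕ)) * w ^ k
          = y (((i : ℕ) : ℤ) + k) := by
        rw [← zpow_natCast w (i : ℕ)]; simp only [hy]; group
      rw [e1]; exact hyB _
    · show (w ^ k)⁻¹ * 1 * w ^ k ∈ B
      have : (w ^ k)⁻¹ * 1 * w ^ k = 1 := by group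
      rw [this]; exact B.one_mem
    · intro a b _ _ ha hb
      show (w ^ k)⁻¹ * (a * b) * w ^ k ∈ B
      have : (w ^ k)⁻¹ * (a * b) * w ^ k
          = ((w ^ k)⁻¹ * a * w ^ k) * ((w ^ k)⁻¹ * b * w ^ k) := by group
      rw [this]; exact mul_mem ha hb
    · intro a _ ha
      show (w ^ k)⁻¹ * a⁻¹ * w ^ k ∈ B
      have : (w ^ k)⁻¹ * a⁻¹ * w ^ k = ((w ^ k)⁻¹ * a * w ^ k)⁻¹ := by group
      rw [this]; exact inv_mem ha
  -- B is normal
  have hwnorm : w ∈ Subgroup.normalizer (B : Set G) := by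
    rw [Subgroup.mem_normalizer_iff]
    intro h
    constructor
    · intro hh
      have e : (w ^ (-1 : ℤ))⁻¹ * h * w ^ (-1 : ℤ) = w * h * w⁻¹ := by group
      exact e ▸ hconj (-1) h hh
    · intro hh
      have e : (w ^ (1 : ℤ))⁻¹ * (w * h * w⁻¹) * w ^ (1 : ℤ) = h := by group
      exact e ▸ hconj 1 _ hh
  have hxnorm : x ∈ Subgroup.normalizer (B : Set G) := by
    rw [Subgroup.mem_normalizer_iff]
    intro h
    constructor
    · intro hh
      have e : x * h = h * x := hab x hxA h (hBA hh)
      have : x * h * x⁻¹ = h := by rw [e]; group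
      rw [this]; exact hh
    · intro hh
      have e : x * (x * h * x⁻¹) = (x * h * x⁻¹) * x := hab x hxA _ (hBA hh)
      have e2 : h = x⁻¹ * ((x * h * x⁻¹) * x) := by group
      rw [e2, ← e]
      have e3 : x⁻¹ * (x * (x * h * x⁻¹)) = x * h * x⁻¹ := by group
      rw [e3]; exact hh
  have hBnormal : B.Normal := by
    refine Subgroup.normalizer_eq_top_iff.mp (top_le_iff.mp ?_)
    rw [← hgen]
    refine (Subgroup.closure_le _).mpr ?_
    intro g hg
    rcases hg with rfl | rfl
    · exact hxnorm
    · exact hwnorm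
  -- decomposition G = B * ⟨w⟩
  have hsup : B ⊔ Subgroup.zpowers w = ⊤ := by
    rw [eq_top_iff, ← hgen]
    refine (Subgroup.closure_le _).mpr ?_
    intro g hg
    rcases hg with rfl | rfl
    · exact Subgroup.mem_sup_left hxB
    · exact Subgroup.mem_sup_right (Subgroup.mem_zpowers _)
  have hdecomp : ∀ g : G, ∃ b ∈ B, ∃ k : ℤ, g = b * w ^ k := by
    intro g
    have hg : g ∈ ((B ⊔ Subgroup.zpowers w : Subgroup G) : Set G) := by
      rw [hsup]; trivial
    haveI := hBnormal
    rw [Subgroup.normal_mul] at hg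
    obtain ⟨b, hb, z, hz, hbz⟩ := hg
    obtain ⟨k, hk⟩ := Subgroup.mem_zpowers_iff.mp hz
    exact ⟨b, hb, k, by rw [← hbz, ← hk]⟩
  -- a subgroup containing some w^k with p ∤ k contains w
  have hpz : Prime ((p : ℕ) : ℤ) := Nat.prime_iff_prime_int.mp hp
  have hcopw : ∀ (M : Subgroup G) (k : ℤ), ¬((p : ℤ) ∣ k) → w ^ k ∈ M → w ∈ M := by
    intro M k hndvd hkM
    obtain ⟨u, v, huv⟩ := ((hpz.coprime_iff_not_dvd.mpr hndvd).pow_left (m := n))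
    have hexp : ((p : ℤ)) ^ n * u + k * v = 1 := by linarith [huv]
    have key : w = (w ^ (((p : ℤ)) ^ n)) ^ u * (w ^ k) ^ v := by
      calc w = w ^ (1 : ℤ) := (zpow_one w).symm
        _ = w ^ (((p : ℤ)) ^ n * u + k * v) := by rw [hexp]
        _ = (w ^ (((p : ℤ)) ^ n)) ^ u * (w ^ k) ^ v := by
            rw [zpow_add, zpow_mul, zpow_mul]
    rw [key, hw1]
    simpa using M.zpow_mem hkM v
  -- main lemma: any proper subgroup containing x is contained in A
  have hmain : ∀ M : Subgroup G, x ∈ M → M ≠ ⊤ → M ≤ A := by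
    intro M hxM hMtop g hgM
    obtain ⟨b, hbB, k, rfl⟩ := hdecomp g
    by_cases hdvd : ((p : ℕ) : ℤ) ∣ k
    · obtain ⟨t, rfl⟩ := hdvd
      refine mul_mem (hBA hbB) ?_
      have e : w ^ (((p : ℕ) : ℤ) * t) = (w ^ p) ^ t := by rw [zpow_mul, zpow_natCast]
      rw [e]; exact A.zpow_mem hwpA t
    · exfalso
      apply hMtop
      have hbfix : ∀ c ∈ B, ∀ m : ℤ, c⁻¹ * y m * c = y m := by
        intro c hc m
        have e : y m * c = c * y m := hab (y m) (hBA (hyB m)) c (hBA hc)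
        rw [mul_assoc, e, ← mul_assoc, inv_mul_cancel, one_mul]
      have hbfix' : ∀ c ∈ B, ∀ m : ℤ, c * y m * c⁻¹ = y m := by
        intro c hc m
        have e : c * y m = y m * c := hab c (hBA hc) (y m) (hBA (hyB m))
        rw [e, mul_assoc, mul_inv_cancel, mul_one]
      have hstep : ∀ m : ℤ, y m ∈ M → y (m + k) ∈ M ∧ y (m - k) ∈ M := by
        intro m hm
        constructor
        · have e1 : (b * w ^ k)⁻¹ * y m * (b * w ^ k)
              = (w ^ k)⁻¹ * (b⁻¹ * y m * b) * w ^ k := by group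
          have e : (b * w ^ k)⁻¹ * y m * (b * w ^ k) = y (m + k) := by
            rw [e1, hbfix b hbB m]; exact hyshift m k
          rw [← e]; exact mul_mem (mul_mem (inv_mem hgM) hm) hgM
        · have e1 : (b * w ^ k) * y m * (b * w ^ k)⁻¹
              = b * ((w ^ (-k))⁻¹ * y m * w ^ (-k)) * b⁻¹ := by group
          have e : (b * w ^ k) * y m * (b * w ^ k)⁻¹ = y (m - k) := by
            rw [e1, hyshift m (-k), hbfix' b hbB]; ring_nf
          rw [← e]; exact mul_mem (mul_mem hgM hm) (inv_mem hgM)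
      have hyM : ∀ j : ℤ, y (k * j) ∈ M := by
        intro j
        induction j using Int.induction_on with
        | zero => simpa [hy] using hxM
        | succ j ih =>
          have := (hstep _ ih).1
          rwa [show k * j + k = k * (j + 1) by ring] at this
        | pred j ih =>
          have := (hstep _ ih).2
          rwa [show k * (-j) - k = k * (-j - 1) by ring] at this
      have hBM : B ≤ M := by
        refine (Subgroup.closure_le M).mpr ?_
        rintro g' ⟨i, rfl⟩
        show (w ^ (i : ℕ))⁻¹ * x * w ^ (i : ℕ) ∈ M
        obtain ⟨u, v, huv⟩ := ((hpz.coprime_iff_not_dvd.mpr hdvd).pow_left (m := n))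
        have hiexp : (((i : ℕ) : ℤ)) = k * (v * (i : ℕ)) + ((p : ℤ)) ^ n * (u * (i : ℕ)) := by
          linear_combination (-((i : ℕ) : ℤ)) * huv
        have hyeq : y (((i : ℕ) : ℤ)) = y (k * (v * (i : ℕ))) := by
          conv_lhs => rw [hiexp]
          have e : w ^ (k * (v * ((i : ℕ) : ℤ)) + ((p : ℤ)) ^ n * (u * ((i : ℕ) : ℤ)))
              = w ^ (k * (v * ((i : ℕ) : ℤ))) := by
            rw [zpow_add, zpow_mul w ((p : ℤ) ^ n) (u * ((i : ℕ) : ℤ)), hw1, one_zpow, mul_one]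
          simp only [hy]; rw [e]
        have e2 : (w ^ (i : ℕ))⁻¹ * x * w ^ (i : ℕ) = y (((i : ℕ) : ℤ)) := by
          simp only [hy, zpow_natCast]
        rw [e2, hyeq]
        exact hyM (v * (i : ℕ))
      have hbM : b ∈ M := hBM hbB
      have hwkM : w ^ k ∈ M := by
        have h2 := mul_mem (inv_mem hbM) hgM
        rwa [inv_mul_cancel_left] at h2
      have hwM : w ∈ M := hcopw M k hdvd hwkM
      rw [eq_top_iff, ← hgen]
      refine (Subgroup.closure_le M).mpr ?_
      intro g' hg'
      rcases hg' with rfl | rfl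
      · exact hxM
      · exact hwM
  have hAne : A ≠ ⊤ := fun h => hwA (by rw [h]; trivial)
  refine ⟨⟨hAne, ?_⟩, hxA, ?_⟩
  · intro M hAM
    by_contra hne
    exact hAM.not_ge (hmain M (hAM.le hxA) hne)
  · intro M hM hxM
    have hMA : M ≤ A := hmain M hxM hM.1
    rcases eq_or_lt_of_le hMA with h | h
    · exact h
    · exact absurd (hM.2 A h) hAne
end
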